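/- arXiv:1509.08876 — 3 statements merged into one kernel-verified Lean document; each statement's English description precedes it below -/
import Mathlib

section
/- For every integer k ≥ 1, the number f(2k+1) of worst-case permutations on the path P_{2k+1} satisfies the recurrence f(2k+1) = 4k·f(2k−1) + (4k² − 2k) · Σ_{j=1}^{k−1} C(2k−2, 2j−1) · f(2j−1) · f(2k−2j−1), where C(a,b) denotes the binomial coefficient and the empty sum (for k = 1) is 0, with f(1) = 1. -/
set_option linter.unusedSectionVars false

def pathGraph (n : ℕ) : SimpleGraph (Fin n) where
  Adj i j := (i : ℕ) + 1 = j ∨ (j : ℕ) + 1 = i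
  symm := ⟨fun i j h => h.symm⟩
  loopless := ⟨by intro i h; omega⟩

open Classical in
noncomputable def domList {V : Type*} [DecidableEq V] (G : SimpleGraph V) (l : List V) : Finset V :=
  l.foldl (fun D v => if ∃ w ∈ D, G.Adj w v then D else insert v D) ∅

noncomputable def GammaSet (n : ℕ) (π : Equiv.Perm (Fin n)) : Finset (Fin n) :=
  domList (pathGraph n) (List.ofFn fun i => π i)

noncomputable def gamma (n : ℕ) (π : Equiv.Perm (Fin n)) : ℕ := (GammaSet n π).card

noncomputable def f (n : ℕ) : ℕ :=
  Nat.card {π : Equiv.Perm (Fin n) // gamma n π = (n + 1) / 2}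

namespace WC

open Classical in
noncomputable def dstep {V : Type*} [DecidableEq V] (G : SimpleGraph V) (D : Finset V) (v : V) : Finset V :=
  if ∃ w ∈ D, G.Adj w v then D else insert v D

variable {V : Type*} [DecidableEq V] {G : SimpleGraph V}

lemma domList_eq (l : List V) : domList G l = l.foldl (dstep G) ∅ := rfl

lemma subset_dstep (D : Finset V) (v : V) : D ⊆ dstep G D v := by
  unfold dstep; split_ifs <;> simp [Finset.subset_insert]

lemma subset_foldl : ∀ (l : List V) (D : Finset V), D ⊆ l.foldl (dstep G) D := by
  intro l
  induction l with
  | nil => intro D; simp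
  | cons a t ih => intro D; exact (subset_dstep D a).trans (ih (dstep G D a))

lemma blocked_of_not_mem : ∀ (l : List V) (D : Finset V) (v : V), v ∈ l →
    v ∉ l.foldl (dstep G) D → ∃ u, G.Adj u v ∧ (u ∈ D ∨ [u, v].Sublist l) := by
  intro l
  induction l with
  | nil => intro D v hv; simp at hv
  | cons a t ih =>
    intro D v hv hnm
    rcases List.mem_cons.mp hv with rfl | hvt
    · -- v = a
      by_cases hb : ∃ w ∈ D, G.Adj w v
      · obtain ⟨u, hu, hadj⟩ := hb
        exact ⟨u, hadj, Or.inl hu⟩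
      · exfalso
        apply hnm
        have : v ∈ dstep G D v := by
          unfold dstep; rw [if_neg hb]; exact Finset.mem_insert_self _ _
        exact subset_foldl t _ this
    · obtain ⟨u, hadj, hu⟩ := ih (dstep G D a) v hvt hnm
      rcases hu with hu | hu
      · unfold dstep at hu
        split_ifs at hu with h
        · exact ⟨u, hadj, Or.inl hu⟩
        · rcases Finset.mem_insert.mp hu with rfl | hu
          · exact ⟨u, hadj, Or.inr (List.cons_sublist_cons.mpr (List.singleton_sublist.mpr hvt))⟩
          · exact ⟨u, hadj, Or.inl hu⟩
      · exact ⟨u, hadj, Or.inr (hu.cons a)⟩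

lemma pair_sublist_pos : ∀ (l : List V) (u v : V), [u, v].Sublist l →
    ∃ i j : ℕ, ∃ (hi : i < l.length) (hj : j < l.length),
      i < j ∧ l.get ⟨i, hi⟩ = u ∧ l.get ⟨j, hj⟩ = v := by
  intro l
  induction l with
  | nil => intro u v h; simp at h
  | cons a t ih =>
    intro u v h
    rcases List.cons_sublist_cons'.mp h with h' | ⟨rfl, h'⟩
    · obtain ⟨i, j, hi, hj, hij, hu, hv⟩ := ih u v h'
      exact ⟨i + 1, j + 1, by simpa using hi, by simpa using hj, by omega, hu, hv⟩
    · have hv : v ∈ t := List.singleton_sublist.mp h'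
      obtain ⟨⟨j, hj⟩, hvj⟩ := List.mem_iff_get.mp hv
      exact ⟨0, j + 1, by simp, by simpa using hj, by omega, rfl, hvj⟩

lemma pos_pair_sublist : ∀ (l : List V) (i j : ℕ) (hi : i < l.length) (hj : j < l.length),
    i < j → [l.get ⟨i, hi⟩, l.get ⟨j, hj⟩].Sublist l := by
  intro l
  induction l with
  | nil => intro i j hi; simp at hi
  | cons a t ih =>
    intro i j hi hj hij
    obtain ⟨j', rfl⟩ : ∃ j', j = j' + 1 := ⟨j - 1, by omega⟩
    match i with
    | 0 =>
      simp only [List.get_cons_zero, List.get_cons_succ]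
      exact List.cons_sublist_cons.mpr (List.singleton_sublist.mpr (List.get_mem _ _))
    | i' + 1 =>
      simp only [List.get_cons_succ]
      exact (ih i' j' _ _ (by omega)).cons a


lemma adj_iff {n : ℕ} {u v : Fin n} : (pathGraph n).Adj u v ↔ (u : ℕ) + 1 = v ∨ (v : ℕ) + 1 = u :=
  Iff.rfl

lemma fold_evens {n : ℕ} : ∀ (l : List (Fin n)) (D : Finset (Fin n)), l.Nodup →
    (∀ v ∈ D, Even (v : ℕ)) →
    (∀ v ∈ l, Odd (v : ℕ) → ∃ u, (pathGraph n).Adj u v ∧ (u ∈ D ∨ [u, v].Sublist l)) →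
    ∀ w, w ∈ l.foldl (dstep (pathGraph n)) D ↔ w ∈ D ∨ (w ∈ l ∧ Even (w : ℕ)) := by
  intro l
  induction l with
  | nil => simp
  | cons a t ih =>
    intro D hnd hD hcond w
    obtain ⟨hat, hndt⟩ := List.nodup_cons.mp hnd
    simp only [List.foldl_cons]
    rcases Nat.even_or_odd (a : ℕ) with ha | ha
    · -- a has even value: it gets inserted
      have hstep : dstep (pathGraph n) D a = insert a D := by
        unfold dstep
        rw [if_neg]
        rintro ⟨u, hu, hadj⟩
        have hue := hD u hu
        have h' : (u : ℕ) + 1 = a ∨ (a : ℕ) + 1 = u := hadj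
        rw [Nat.even_iff] at hue ha
        omega
      rw [hstep]
      have hcond' : ∀ v ∈ t, Odd (v : ℕ) →
          ∃ u, (pathGraph n).Adj u v ∧ (u ∈ insert a D ∨ [u, v].Sublist t) := by
        intro v hv hodd
        obtain ⟨u, hadj, hu⟩ := hcond v (List.mem_cons_of_mem a hv) hodd
        rcases hu with hu | hu
        · exact ⟨u, hadj, Or.inl (Finset.mem_insert_of_mem hu)⟩
        · rcases List.cons_sublist_cons'.mp hu with h' | ⟨rfl, _⟩
          · exact ⟨u, hadj, Or.inr h'⟩
          · exact ⟨u, hadj, Or.inl (Finset.mem_insert_self _ _)⟩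
      have := ih (insert a D) hndt
        (by intro v hv; rcases Finset.mem_insert.mp hv with rfl | hv
            · exact ha
            · exact hD v hv) hcond' w
      rw [this]
      by_cases hw : w = a
      · subst hw
        simp [ha]
      · simp only [Finset.mem_insert, List.mem_cons, hw, false_or]
        try tauto
    · -- a has odd value: it is blocked
      obtain ⟨u, hadj, hu⟩ := hcond a List.mem_cons_self ha
      have hu' : u ∈ D := by
        rcases hu with hu | hu
        · exact hu
        · exfalso
          rcases List.cons_sublist_cons'.mp hu with h' | ⟨heq, h'⟩
          · exact hat (h'.subset (by simp))
          · exact hat (List.singleton_sublist.mp h')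
      have hstep : dstep (pathGraph n) D a = D := by
        unfold dstep; exact if_pos ⟨u, hu', hadj⟩
      rw [hstep]
      have hcond' : ∀ v ∈ t, Odd (v : ℕ) →
          ∃ u', (pathGraph n).Adj u' v ∧ (u' ∈ D ∨ [u', v].Sublist t) := by
        intro v hv hodd
        obtain ⟨u', hadj', hu'2⟩ := hcond v (List.mem_cons_of_mem a hv) hodd
        rcases hu'2 with h2 | h2
        · exact ⟨u', hadj', Or.inl h2⟩
        · rcases List.cons_sublist_cons'.mp h2 with h' | ⟨rfl, _⟩
          · exact ⟨u', hadj', Or.inr h'⟩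
          · exfalso
            have h3 : (u' : ℕ) + 1 = v ∨ (v : ℕ) + 1 = u' := hadj'
            rw [Nat.odd_iff] at ha hodd
            omega
      rw [ih D hndt hD hcond' w]
      by_cases hw : w = a
      · subst hw
        rw [Nat.odd_iff] at ha
        simp only [List.mem_cons, true_or, true_and]
        constructor
        · tauto
        · rintro (h | h)
          · exact Or.inl h
          · rw [Nat.even_iff] at h; omega
      · simp only [List.mem_cons, hw, false_or]

lemma fold_indep {V : Type*} [DecidableEq V] {G : SimpleGraph V} :
    ∀ (l : List V) (D : Finset V), (∀ u ∈ D, ∀ v ∈ D, ¬ G.Adj u v) →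
    ∀ u ∈ l.foldl (dstep G) D, ∀ v ∈ l.foldl (dstep G) D, ¬ G.Adj u v := by
  intro l
  induction l with
  | nil => intro D h; simpa using h
  | cons a t ih =>
    intro D hD
    simp only [List.foldl_cons]
    apply ih
    unfold dstep
    split_ifs with hb
    · exact hD
    · intro u hu v hv hadj
      rcases Finset.mem_insert.mp hu with hua | hu
      · rcases Finset.mem_insert.mp hv with hva | hv
        · exact G.loopless.irrefl v (by rwa [hua, ← hva] at hadj)
        · exact hb ⟨v, hv, G.adj_symm (by rwa [hua] at hadj)⟩
      · rcases Finset.mem_insert.mp hv with hva | hv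
        · exact hb ⟨u, hu, by rwa [hva] at hadj⟩
        · exact hD u hu v hv hadj

lemma card_evens (k : ℕ) :
    (Finset.univ.filter (fun v : Fin (2 * k + 1) => Even (v : ℕ))).card = k + 1 := by
  rw [← Fintype.card_subtype]
  have e : {v : Fin (2 * k + 1) // Even (v : ℕ)} ≃ Fin (k + 1) := {
    toFun := fun v => ⟨(v : ℕ) / 2, by have := v.1.isLt; omega⟩
    invFun := fun m => ⟨⟨2 * (m : ℕ), by have := m.isLt; omega⟩,
      by refine ⟨(m : ℕ), ?_⟩; show 2 * (m : ℕ) = (m : ℕ) + (m : ℕ); omega⟩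
    left_inv := by
      rintro ⟨v, hv⟩
      apply Subtype.ext; apply Fin.ext
      show 2 * ((v : ℕ) / 2) = (v : ℕ)
      rw [Nat.even_iff] at hv
      omega
    right_inv := by
      intro m
      apply Fin.ext
      show 2 * (m : ℕ) / 2 = (m : ℕ)
      omega }
  rw [Fintype.card_congr e, Fintype.card_fin]

lemma indep_eq_evens (k : ℕ) (D : Finset (Fin (2 * k + 1)))
    (hind : ∀ u ∈ D, ∀ v ∈ D, ¬ (pathGraph (2 * k + 1)).Adj u v)
    (hcard : D.card = k + 1) : ∀ v, v ∈ D ↔ Even (v : ℕ) := by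
  classical
  set g : Fin (2 * k + 1) → Fin (k + 1) := fun v => ⟨(v : ℕ) / 2, by omega⟩ with hg
  have hinj : ∀ u ∈ D, ∀ v ∈ D, g u = g v → u = v := by
    intro u hu v hv huv
    by_contra hne
    have hval : (u : ℕ) ≠ v := fun h => hne (Fin.ext h)
    have hdiv : (u : ℕ) / 2 = (v : ℕ) / 2 := congrArg Fin.val huv
    have : (u : ℕ) + 1 = v ∨ (v : ℕ) + 1 = u := by omega
    exact hind u hu v hv this
  have himg : (D.image g).card = k + 1 := by
    rw [Finset.card_image_of_injOn (fun u hu v hv => hinj u hu v hv), hcard]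
  have huniv : D.image g = Finset.univ := by
    apply Finset.eq_univ_of_card
    rw [himg, Fintype.card_fin]
  have hsurj : ∀ m : ℕ, m ≤ k → ∃ v ∈ D, (v : ℕ) / 2 = m := by
    intro m hm
    have : (⟨m, by omega⟩ : Fin (k + 1)) ∈ D.image g :=
      Finset.eq_univ_iff_forall.mp huniv _
    obtain ⟨v, hv, hgv⟩ := Finset.mem_image.mp this
    exact ⟨v, hv, congrArg Fin.val hgv⟩
  have claim : ∀ d, d ≤ k → (⟨2 * (k - d), by omega⟩ : Fin (2 * k + 1)) ∈ D := by
    intro d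
    induction d with
    | zero =>
      intro _
      obtain ⟨v, hv, hv2⟩ := hsurj k le_rfl
      have hval : (v : ℕ) = 2 * (k - 0) := by have := v.isLt; omega
      have : v = ⟨2 * (k - 0), by omega⟩ := Fin.ext hval
      exact this ▸ hv
    | succ d ihd =>
      intro hd
      have hprev := ihd (by omega)
      obtain ⟨v, hv, hv2⟩ := hsurj (k - d - 1) (by omega)
      have hcases : (v : ℕ) = 2 * (k - d) - 1 ∨ (v : ℕ) = 2 * (k - d - 1) := by
        have := v.isLt; omega
      rcases hcases with hodd | heven
      · exfalso
        have hadj : (pathGraph (2 * k + 1)).Adj v ⟨2 * (k - d), by omega⟩ :=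
          Or.inl (show (v : ℕ) + 1 = 2 * (k - d) by omega)
        exact hind v hv _ hprev hadj
      · have : v = ⟨2 * (k - (d + 1)), by omega⟩ := Fin.ext (by show (v:ℕ) = 2*(k-(d+1)); omega)
        exact this ▸ hv
  intro v
  constructor
  · intro hv
    by_contra hodd
    rw [Nat.even_iff] at hodd
    have hEsub : Finset.univ.filter (fun w : Fin (2 * k + 1) => Even (w : ℕ)) ⊆ D := by
      intro w hw
      have hwe : Even (w : ℕ) := (Finset.mem_filter.mp hw).2
      rw [Nat.even_iff] at hwe
      have : w = ⟨2 * (k - (k - (w : ℕ) / 2)), by omega⟩ := by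
        apply Fin.ext; simp only []; omega
      exact this ▸ claim (k - (w : ℕ) / 2) (by omega)
    have hvE : v ∉ Finset.univ.filter (fun w : Fin (2 * k + 1) => Even (w : ℕ)) := by
      simp only [Finset.mem_filter, Finset.mem_univ, true_and, Nat.even_iff]
      omega
    have hsub : insert v (Finset.univ.filter (fun w : Fin (2 * k + 1) => Even (w : ℕ))) ⊆ D := by
      intro w hw
      rcases Finset.mem_insert.mp hw with rfl | hw
      · exact hv
      · exact hEsub hw
    have := Finset.card_le_card hsub
    rw [Finset.card_insert_of_notMem hvE, card_evens k, hcard] at this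
    omega
  · intro hv
    rw [Nat.even_iff] at hv
    have : v = ⟨2 * (k - (k - (v : ℕ) / 2)), by omega⟩ := by
      apply Fin.ext; simp only []; omega
    exact this ▸ claim (k - (v : ℕ) / 2) (by omega)

/-- The combinatorial condition equivalent to being a worst-case permutation. -/
def Qp (m : ℕ) (π : Equiv.Perm (Fin m)) : Prop :=
  ∀ i : Fin m, Odd ((π i : Fin m) : ℕ) → ∃ j : Fin m, j < i ∧ (pathGraph m).Adj (π j) (π i)

noncomputable def g (m : ℕ) : ℕ := Nat.card {π : Equiv.Perm (Fin m) // Qp m π}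

lemma gamma_eq_iff (k : ℕ) (π : Equiv.Perm (Fin (2 * k + 1))) :
    gamma (2 * k + 1) π = k + 1 ↔ Qp (2 * k + 1) π := by
  set l : List (Fin (2 * k + 1)) := List.ofFn (fun i => π i) with hl
  have hlen : l.length = 2 * k + 1 := by rw [hl, List.length_ofFn]
  have hget : ∀ (i : ℕ) (hi : i < l.length), l.get ⟨i, hi⟩ = π ⟨i, hlen ▸ hi⟩ := by
    intro i hi
    show (List.ofFn (fun i => π i)).get ⟨i, hi⟩ = _
    rw [List.get_ofFn]
    congr 1
  have hnd : l.Nodup := List.nodup_ofFn.mpr (fun i j h => π.injective h)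
  have hmem : ∀ v : Fin (2 * k + 1), v ∈ l := by
    intro v
    rw [hl, List.mem_ofFn]
    exact ⟨π.symm v, π.apply_symm_apply v⟩
  have hGam : GammaSet (2 * k + 1) π = l.foldl (dstep (pathGraph (2 * k + 1))) ∅ := rfl
  constructor
  · -- gamma = k+1 → Qp
    intro hcard
    have hind := fold_indep (G := pathGraph (2 * k + 1)) l (∅ : Finset (Fin (2 * k + 1))) (by simp)
    rw [← hGam] at hind
    have hiff := indep_eq_evens k (GammaSet (2 * k + 1) π) hind hcard
    intro i hodd
    have hnm : π i ∉ GammaSet (2 * k + 1) π := by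
      rw [hiff, Nat.even_iff]
      rw [Nat.odd_iff] at hodd
      omega
    rw [hGam] at hnm
    obtain ⟨u, hadj, hu⟩ := blocked_of_not_mem l ∅ (π i) (hmem _) hnm
    rcases hu with hu | hu
    · simp at hu
    · obtain ⟨i', j', hi', hj', hij, hgu, hgv⟩ := pair_sublist_pos l u (π i) hu
      rw [hget i' hi'] at hgu
      rw [hget j' hj'] at hgv
      have hj'i : (⟨j', hlen ▸ hj'⟩ : Fin (2 * k + 1)) = i := π.injective hgv
      refine ⟨⟨i', hlen ▸ hi'⟩, ?_, ?_⟩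
      · rw [← hj'i]
        exact hij
      · rw [hgu]; exact hadj
  · -- Qp → gamma = k+1
    intro hQ
    have hcond : ∀ v ∈ l, Odd (v : ℕ) →
        ∃ u, (pathGraph (2 * k + 1)).Adj u v ∧
          (u ∈ (∅ : Finset (Fin (2 * k + 1))) ∨ [u, v].Sublist l) := by
      intro v hv hodd
      obtain ⟨i, rfl⟩ : ∃ i, π i = v := by
        rw [hl, List.mem_ofFn] at hv
        exact hv
      obtain ⟨j, hji, hadj⟩ := hQ i hodd
      refine ⟨π j, hadj, Or.inr ?_⟩
      have h1 : l.get ⟨(j : ℕ), hlen.symm ▸ j.isLt⟩ = π j := by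
        rw [hget]
      have h2 : l.get ⟨(i : ℕ), hlen.symm ▸ i.isLt⟩ = π i := by
        rw [hget]
      have := pos_pair_sublist l (j : ℕ) (i : ℕ) (hlen.symm ▸ j.isLt) (hlen.symm ▸ i.isLt) hji
      rwa [h1, h2] at this
    have hev := fold_evens l ∅ hnd (by simp) hcond
    have hset : GammaSet (2 * k + 1) π = Finset.univ.filter (fun v : Fin (2 * k + 1) => Even (v : ℕ)) := by
      rw [hGam]
      ext w
      rw [hev w]
      simp [hmem w]
    rw [gamma, hset]
    exact card_evens k

lemma f_eq_g (k : ℕ) : f (2 * k + 1) = g (2 * k + 1) := by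
  unfold f g
  apply Nat.card_congr
  apply Equiv.subtypeEquivRight
  intro π
  have : (2 * k + 1 + 1) / 2 = k + 1 := by omega
  rw [this]
  exact gamma_eq_iff k π


section BIN

variable {V : Type*} [DecidableEq V] {m : ℕ}

/-- positions where the image satisfies `P` -/
def posSet (P : V → Prop) [DecidablePred P] (e : Fin m ≃ V) : Finset (Fin m) :=
  Finset.univ.filter (fun i => P (e i))

lemma mem_posSet {P : V → Prop} [DecidablePred P] {e : Fin m ≃ V} {i : Fin m} :
    i ∈ posSet P e ↔ P (e i) := by simp [posSet]

lemma posSet_card [Fintype V] {P : V → Prop} [DecidablePred P] (e : Fin m ≃ V) {a : ℕ}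
    (ha : Fintype.card {v // P v} = a) : (posSet P e).card = a := by
  rw [← ha, Fintype.card_subtype]
  apply Finset.card_bij (fun i _ => e i)
  · intro i hi
    simp only [Finset.mem_filter, Finset.mem_univ, true_and]
    exact mem_posSet.mp hi
  · intro i _ j _ h
    exact e.injective h
  · intro v hv
    refine ⟨e.symm v, mem_posSet.mpr ?_, e.apply_symm_apply v⟩
    rw [e.apply_symm_apply]
    exact (Finset.mem_filter.mp hv).2

/-- the induced ordering on the `P`-part -/
noncomputable def compOf (P : V → Prop) [DecidablePred P] (e : Fin m ≃ V) {a : ℕ}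
    (h : (posSet P e).card = a) : Fin a ≃ {v // P v} :=
  ((posSet P e).orderIsoOfFin h).toEquiv.trans
    (e.subtypeEquiv (fun i => mem_posSet))

lemma compOf_coe (P : V → Prop) [DecidablePred P] (e : Fin m ≃ V) {a : ℕ}
    (h : (posSet P e).card = a) (x : Fin a) :
    (compOf P e h x : V) = e (((posSet P e).orderIsoOfFin h x : Fin m)) := rfl

lemma orderIsoOfFin_strictMono {s : Finset (Fin m)} {a : ℕ} (h : s.card = a) :
    StrictMono (fun x => ((s.orderIsoOfFin h x : Fin m))) := by
  intro x y hxy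
  exact (s.orderIsoOfFin h).lt_iff_lt.mpr hxy

lemma orderIsoOfFin_surj {s : Finset (Fin m)} {a : ℕ} (h : s.card = a) {i : Fin m} (hi : i ∈ s) :
    ∃ x, ((s.orderIsoOfFin h x : Fin m)) = i :=
  ⟨(s.orderIsoOfFin h).symm ⟨i, hi⟩, by simp⟩

/-- transfer of "exists earlier position satisfying A" to the induced suborder, when
all witnesses of `A` automatically lie in the `P`-part. -/
lemma exists_lt_transfer (P : V → Prop) [DecidablePred P] (e : Fin m ≃ V) {a : ℕ}
    (h : (posSet P e).card = a) (A : V → Prop) (hA : ∀ u, A u → P u) (x : Fin a) :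
    (∃ i : Fin m, i < ((posSet P e).orderIsoOfFin h x : Fin m) ∧ A (e i)) ↔
    (∃ x' : Fin a, x' < x ∧ A (compOf P e h x' : V)) := by
  constructor
  · rintro ⟨i, hlt, hAi⟩
    have hmem : i ∈ posSet P e := mem_posSet.mpr (hA _ hAi)
    obtain ⟨x', hx'⟩ := orderIsoOfFin_surj h hmem
    refine ⟨x', ?_, ?_⟩
    · by_contra hle
      push_neg at hle
      have h2 := (orderIsoOfFin_strictMono h).le_iff_le.mpr hle
      rw [hx'] at h2
      exact absurd hlt (not_lt.mpr h2)
    · rw [compOf_coe, hx']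
      exact hAi
  · rintro ⟨x', hlt, hAx⟩
    exact ⟨_, orderIsoOfFin_strictMono h hlt, hAx⟩

variable (P : V → Prop) [DecidablePred P]

/-- rebuild an ordering of `V` from a position set and orderings of the two parts -/
noncomputable def buildE (s : Finset (Fin m)) {a b : ℕ} (hs : s.card = a) (hsc : sᶜ.card = b)
    (e1 : Fin a ≃ {v // P v}) (e2 : Fin b ≃ {v // ¬ P v}) : Fin m ≃ V :=
  ((Equiv.sumCompl (· ∈ s)).symm).trans
    ((Equiv.sumCongr ((s.orderIsoOfFin hs).toEquiv.symm.trans e1)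
      ((Equiv.subtypeEquivRight (fun i => (Finset.mem_compl (s := s) (a := i)).symm)).trans
        ((sᶜ.orderIsoOfFin hsc).toEquiv.symm.trans e2))).trans
      (Equiv.sumCompl P))

lemma buildE_apply_mem (s : Finset (Fin m)) {a b : ℕ} (hs : s.card = a) (hsc : sᶜ.card = b)
    (e1 : Fin a ≃ {v // P v}) (e2 : Fin b ≃ {v // ¬ P v}) {i : Fin m} (hi : i ∈ s) :
    buildE P s hs hsc e1 e2 i = (e1 ((s.orderIsoOfFin hs).symm ⟨i, hi⟩) : V) := by
  unfold buildE
  rw [Equiv.trans_apply, Equiv.trans_apply, Equiv.sumCompl_symm_apply_of_pos hi]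
  rfl

lemma buildE_apply_not_mem (s : Finset (Fin m)) {a b : ℕ} (hs : s.card = a) (hsc : sᶜ.card = b)
    (e1 : Fin a ≃ {v // P v}) (e2 : Fin b ≃ {v // ¬ P v}) {i : Fin m} (hi : i ∉ s) :
    buildE P s hs hsc e1 e2 i =
      (e2 ((sᶜ.orderIsoOfFin hsc).symm ⟨i, Finset.mem_compl.mpr hi⟩) : V) := by
  unfold buildE
  rw [Equiv.trans_apply, Equiv.trans_apply, Equiv.sumCompl_symm_apply_of_neg hi]
  rfl

lemma buildE_P_iff (s : Finset (Fin m)) {a b : ℕ} (hs : s.card = a) (hsc : sᶜ.card = b)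
    (e1 : Fin a ≃ {v // P v}) (e2 : Fin b ≃ {v // ¬ P v}) (i : Fin m) :
    P (buildE P s hs hsc e1 e2 i) ↔ i ∈ s := by
  by_cases hi : i ∈ s
  · rw [buildE_apply_mem P s hs hsc e1 e2 hi]
    simp only [hi, iff_true]
    exact (e1 ((s.orderIsoOfFin hs).symm ⟨i, hi⟩)).2
  · rw [buildE_apply_not_mem P s hs hsc e1 e2 hi]
    simp only [hi, iff_false]
    exact (e2 ((sᶜ.orderIsoOfFin hsc).symm ⟨i, Finset.mem_compl.mpr hi⟩)).2

lemma posSet_buildE (s : Finset (Fin m)) {a b : ℕ} (hs : s.card = a) (hsc : sᶜ.card = b)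
    (e1 : Fin a ≃ {v // P v}) (e2 : Fin b ≃ {v // ¬ P v}) :
    posSet P (buildE P s hs hsc e1 e2) = s := by
  ext i
  rw [mem_posSet]
  exact buildE_P_iff P s hs hsc e1 e2 i

lemma orderIsoOfFin_congr {s t : Finset (Fin m)} (hst : s = t) {a : ℕ} (hs : s.card = a)
    (ht : t.card = a) (x : Fin a) :
    ((s.orderIsoOfFin hs x : Fin m)) = ((t.orderIsoOfFin ht x : Fin m)) := by
  subst hst
  rfl

lemma compOf_buildE_left (s : Finset (Fin m)) {a b : ℕ} (hs : s.card = a) (hsc : sᶜ.card = b)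
    (e1 : Fin a ≃ {v // P v}) (e2 : Fin b ≃ {v // ¬ P v})
    (h : (posSet P (buildE P s hs hsc e1 e2)).card = a) :
    compOf P (buildE P s hs hsc e1 e2) h = e1 := by
  apply Equiv.ext
  intro x
  apply Subtype.ext
  rw [compOf_coe]
  have hpos := posSet_buildE P s hs hsc e1 e2
  rw [orderIsoOfFin_congr hpos h hs x]
  have hmem : ((s.orderIsoOfFin hs x : Fin m)) ∈ s := (s.orderIsoOfFin hs x).2
  rw [buildE_apply_mem P s hs hsc e1 e2 hmem]
  congr 1
  have heq : (⟨((s.orderIsoOfFin hs) x : Fin m), hmem⟩ : {y // y ∈ s}) = (s.orderIsoOfFin hs) x :=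
    Subtype.ext rfl
  rw [heq]
  exact congrArg e1 ((s.orderIsoOfFin hs).symm_apply_apply x)

lemma compOf_buildE_right (s : Finset (Fin m)) {a b : ℕ} (hs : s.card = a) (hsc : sᶜ.card = b)
    (e1 : Fin a ≃ {v // P v}) (e2 : Fin b ≃ {v // ¬ P v})
    (h : (posSet (fun v => ¬ P v) (buildE P s hs hsc e1 e2)).card = b) :
    compOf (fun v => ¬ P v) (buildE P s hs hsc e1 e2) h = e2 := by
  apply Equiv.ext
  intro x
  apply Subtype.ext
  rw [compOf_coe]
  have hpos : posSet (fun v => ¬ P v) (buildE P s hs hsc e1 e2) = sᶜ := by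
    ext i
    rw [mem_posSet, Finset.mem_compl, not_iff_not]
    exact buildE_P_iff P s hs hsc e1 e2 i
  rw [orderIsoOfFin_congr hpos h hsc x]
  have hmem : ((sᶜ.orderIsoOfFin hsc x : Fin m)) ∈ sᶜ := (sᶜ.orderIsoOfFin hsc x).2
  rw [buildE_apply_not_mem P s hs hsc e1 e2 (Finset.mem_compl.mp hmem)]
  congr 1
  have heq : (⟨((sᶜ.orderIsoOfFin hsc) x : Fin m), Finset.mem_compl.mpr (Finset.mem_compl.mp hmem)⟩ :
      {y // y ∈ sᶜ}) = (sᶜ.orderIsoOfFin hsc) x := Subtype.ext rfl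
  rw [heq]
  exact congrArg e2 ((sᶜ.orderIsoOfFin hsc).symm_apply_apply x)

lemma buildE_comp (e : Fin m ≃ V) {a b : ℕ} (h1 : (posSet P e).card = a)
    (h2 : (posSet P e)ᶜ.card = b) (h2' : (posSet (fun v => ¬ P v) e).card = b) :
    buildE P (posSet P e) h1 h2 (compOf P e h1) (compOf (fun v => ¬ P v) e h2') = e := by
  apply Equiv.ext
  intro i
  by_cases hi : i ∈ posSet P e
  · rw [buildE_apply_mem P _ h1 h2 _ _ hi, compOf_coe]
    congr 1
    simp
  · rw [buildE_apply_not_mem P _ h1 h2 _ _ hi, compOf_coe]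
    have hps : posSet (fun v => ¬ P v) e = (posSet P e)ᶜ := by
      ext j
      simp [mem_posSet, Finset.mem_compl]
    have : ∀ (x : Fin b), ((posSet (fun v => ¬ P v) e).orderIsoOfFin h2' x : Fin m) =
        (((posSet P e)ᶜ).orderIsoOfFin h2 x : Fin m) :=
      fun x => orderIsoOfFin_congr hps h2' h2 x
    rw [this]
    congr 1
    generalize_proofs hpf
    have := (((posSet P e)ᶜ).orderIsoOfFin h2).apply_symm_apply ⟨i, hpf⟩
    exact congrArg Subtype.val this

end BIN


lemma card_finsetCard (m a : ℕ) : Nat.card {s : Finset (Fin m) // s.card = a} = m.choose a := by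
  rw [Nat.card_eq_fintype_card, Fintype.card_finset_len, Fintype.card_fin]

theorem bin_count {V : Type*} [DecidableEq V] [Fintype V] (P : V → Prop) [DecidablePred P]
    {m a b : ℕ} (hm : Fintype.card V = m) (ha : Fintype.card {v // P v} = a)
    (hb : Fintype.card {v // ¬ P v} = b)
    (Q : (Fin m ≃ V) → Prop) (Q1 : (Fin a ≃ {v // P v}) → Prop)
    (Q2 : (Fin b ≃ {v // ¬ P v}) → Prop)
    (compat : ∀ (e : Fin m ≃ V), Q e ↔
      Q1 (compOf P e (posSet_card e ha)) ∧ Q2 (compOf (fun v => ¬ P v) e (posSet_card e hb))) :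
    Nat.card {e : Fin m ≃ V // Q e} =
      m.choose a * (Nat.card {e1 // Q1 e1} * Nat.card {e2 // Q2 e2}) := by
  have hab : a + b = m := by
    rw [← ha, ← hb, ← hm, Fintype.card_subtype_compl]
    have := Fintype.card_subtype_le (p := P)
    omega
  have hsc : ∀ (s : Finset (Fin m)), s.card = a → sᶜ.card = b := by
    intro s hs
    rw [Finset.card_compl, hs, Fintype.card_fin]
    omega
  have key : {e : Fin m ≃ V // Q e} ≃
      ({s : Finset (Fin m) // s.card = a} × {e1 // Q1 e1} × {e2 // Q2 e2}) := {
    toFun := fun x =>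
      (⟨posSet P x.1, posSet_card x.1 ha⟩,
       ⟨compOf P x.1 (posSet_card x.1 ha), ((compat x.1).mp x.2).1⟩,
       ⟨compOf (fun v => ¬ P v) x.1 (posSet_card x.1 hb), ((compat x.1).mp x.2).2⟩)
    invFun := fun t =>
      ⟨buildE P t.1.1 t.1.2 (hsc t.1.1 t.1.2) t.2.1.1 t.2.2.1, by
        rw [compat]
        constructor
        · rw [compOf_buildE_left P t.1.1 t.1.2 (hsc t.1.1 t.1.2) t.2.1.1 t.2.2.1]
          exact t.2.1.2
        · rw [compOf_buildE_right P t.1.1 t.1.2 (hsc t.1.1 t.1.2) t.2.1.1 t.2.2.1]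
          exact t.2.2.2⟩
    left_inv := by
      rintro ⟨e, q⟩
      apply Subtype.ext
      exact buildE_comp P e (posSet_card e ha) (hsc _ (posSet_card e ha)) (posSet_card e hb)
    right_inv := by
      rintro ⟨⟨s, hs⟩, ⟨e1, q1⟩, ⟨e2, q2⟩⟩
      refine Prod.ext ?_ (Prod.ext ?_ ?_)
      · exact Subtype.ext (posSet_buildE P s hs (hsc s hs) e1 e2)
      · exact Subtype.ext (compOf_buildE_left P s hs (hsc s hs) e1 e2 _)
      · exact Subtype.ext (compOf_buildE_right P s hs (hsc s hs) e1 e2 _) }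
  rw [Nat.card_congr key, Nat.card_prod, Nat.card_prod, card_finsetCard]


/-- adjacency of labels, as naturals -/
def AdjN (x y : ℕ) : Prop := x + 1 = y ∨ y + 1 = x

/-- values that are neighbors of `2j` -/
def FreeP (j x : ℕ) : Prop := x + 1 = 2 * j ∨ x = 2 * j + 1

def finSuccEquivNe (n : ℕ) : Fin n ≃ {i : Fin (n + 1) // i ≠ 0} := {
  toFun := fun i => ⟨i.succ, Fin.succ_ne_zero i⟩
  invFun := fun j => j.1.pred j.2
  left_inv := fun i => by simp
  right_inv := fun j => by apply Subtype.ext; simp }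

noncomputable def EV (n : ℕ) (c : Fin (n + 1)) :
    {π : Equiv.Perm (Fin (n + 1)) // π 0 = c} ≃ (Fin n ≃ {v : Fin (n + 1) // v ≠ c}) := {
  toFun := fun x => (finSuccEquivNe n).trans (Equiv.subtypeEquiv x.1
    (fun i => not_iff_not.mpr ⟨fun h => by rw [h]; exact x.2,
      fun h => x.1.injective (h.trans x.2.symm)⟩))
  invFun := fun e => ⟨(finSuccEquiv n).trans ((e.optionCongr).trans (Equiv.optionSubtypeNe c)), by
    simp⟩
  left_inv := by
    rintro ⟨π, h0⟩
    apply Subtype.ext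
    apply Equiv.ext
    intro y
    induction y using Fin.cases with
    | zero => simp [h0]
    | succ i => simp [finSuccEquivNe]
  right_inv := by
    intro e
    apply Equiv.ext
    intro i
    apply Subtype.ext
    simp [finSuccEquivNe] }

lemma EV_coe (n : ℕ) (c : Fin (n + 1)) (x : {π : Equiv.Perm (Fin (n + 1)) // π 0 = c})
    (i : Fin n) : ((EV n c x) i : Fin (n + 1)) = x.1 i.succ := rfl

/-- transported condition, on orderings of the vertices other than `c` (whose value is `2j`). -/
def QV (k j : ℕ) (c : Fin (2 * k + 1)) (e : Fin (2 * k) ≃ {v : Fin (2 * k + 1) // v ≠ c}) : Prop :=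
  ∀ i : Fin (2 * k), Odd ((e i : Fin (2 * k + 1)) : ℕ) →
    FreeP j ((e i : Fin (2 * k + 1)) : ℕ) ∨
    ∃ i' : Fin (2 * k), i' < i ∧ AdjN ((e i' : Fin (2 * k + 1)) : ℕ) ((e i : Fin (2 * k + 1)) : ℕ)

lemma T1 (k j : ℕ) (c : Fin (2 * k + 1)) (hc : (c : ℕ) = 2 * j)
    (x : {π : Equiv.Perm (Fin (2 * k + 1)) // π 0 = c}) :
    Qp (2 * k + 1) x.1 ↔ QV k j c (EV (2 * k) c x) := by
  constructor
  · intro hQ i hodd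
    obtain ⟨j', hj', hadj⟩ := hQ i.succ hodd
    have hadj' : AdjN ((x.1 j' : Fin (2 * k + 1)) : ℕ) ((x.1 i.succ : Fin (2 * k + 1)) : ℕ) := hadj
    rcases Fin.eq_zero_or_eq_succ j' with rfl | ⟨i'', rfl⟩
    · left
      rw [EV_coe]
      rw [x.2] at hadj'
      rw [hc] at hadj'
      unfold AdjN at hadj'
      unfold FreeP
      omega
    · right
      exact ⟨i'', Fin.succ_lt_succ_iff.mp hj', hadj⟩
  · intro hQV i hodd
    rcases Fin.eq_zero_or_eq_succ i with rfl | ⟨i₂, rfl⟩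
    · exfalso
      rw [x.2] at hodd
      rw [Nat.odd_iff] at hodd
      omega
    · rcases hQV i₂ hodd with hfree | ⟨i', hlt, hadj⟩
      · refine ⟨0, Fin.succ_pos i₂, ?_⟩
        show AdjN ((x.1 0 : Fin (2 * k + 1)) : ℕ) ((x.1 i₂.succ : Fin (2 * k + 1)) : ℕ)
        rw [x.2, hc]
        have hv : ((EV (2 * k) c x) i₂ : Fin (2 * k + 1)) = x.1 i₂.succ := rfl
        rw [hv] at hfree
        unfold FreeP at hfree
        unfold AdjN
        omega
      · exact ⟨i'.succ, Fin.succ_lt_succ_iff.mpr hlt, hadj⟩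


/-- generic condition: each odd-valued element is either excused (`D`) or has an
earlier `AdjN`-neighbor. -/
def QX {α : Type*} (ν : α → ℕ) (D : α → Prop) {m : ℕ} (e : Fin m ≃ α) : Prop :=
  ∀ i : Fin m, Odd (ν (e i)) → D (e i) ∨ ∃ i', i' < i ∧ AdjN (ν (e i')) (ν (e i))

lemma compat_split {α : Type*} [DecidableEq α] [Fintype α] (ν : α → ℕ) (D : α → Prop)
    (P : α → Prop) [DecidablePred P] {a b : ℕ}
    (ha : Fintype.card {v // P v} = a) (hb : Fintype.card {v // ¬ P v} = b)
    (D1 : {v // P v} → Prop) (D2 : {v // ¬ P v} → Prop)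
    (hD1 : ∀ x : {v // P v}, D1 x ↔ D x.1) (hD2 : ∀ x : {v // ¬ P v}, D2 x ↔ D x.1)
    (hpart : ∀ u v : α, Odd (ν v) → ¬ D v → AdjN (ν u) (ν v) → (P v ↔ P u))
    {m : ℕ} (e : Fin m ≃ α) :
    QX ν D e ↔ QX (fun x => ν x.1) D1 (compOf P e (posSet_card e ha))
      ∧ QX (fun x => ν x.1) D2 (compOf (fun v => ¬ P v) e (posSet_card e hb)) := by
  have fwd : ∀ (P' : α → Prop) (instP : DecidablePred P') (a' : ℕ)
      (ha' : Fintype.card {v // P' v} = a')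
      (hpart' : ∀ u v : α, Odd (ν v) → ¬ D v → AdjN (ν u) (ν v) → P' v → P' u)
      (D' : {v // P' v} → Prop) (hD' : ∀ x : {v // P' v}, D' x ↔ D x.1),
      QX ν D e → QX (fun x => ν x.1)  D' (compOf P' e (posSet_card e ha')) := by
    intro P' instP a' ha' hpart' D' hD' hQ i2 hodd2
    simp only [] at hodd2 ⊢
    have hco : ∀ y, ((compOf P' e (posSet_card e ha') y : α)) =
        e (((posSet P' e).orderIsoOfFin (posSet_card e ha') y : Fin m)) :=
      fun y => compOf_coe P' e (posSet_card e ha') y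
    rw [hco] at hodd2
    by_cases hD : D (e (((posSet P' e).orderIsoOfFin (posSet_card e ha') i2 : Fin m)))
    · left
      rw [hD', hco]
      exact hD
    · rcases hQ _ hodd2 with hD3 | ⟨i', hlt, hadj⟩
      · exact absurd hD3 hD
      · right
        have hP'v : P' (e (((posSet P' e).orderIsoOfFin (posSet_card e ha') i2 : Fin m))) := by
          have := (compOf P' e (posSet_card e ha') i2).2
          rwa [show ((compOf P' e (posSet_card e ha') i2).1 : α) =
            e (((posSet P' e).orderIsoOfFin (posSet_card e ha') i2 : Fin m)) from hco i2] at this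
        have hA : ∀ u : α,
            (AdjN (ν u) (ν (e (((posSet P' e).orderIsoOfFin (posSet_card e ha') i2 : Fin m)))))
            → P' u := fun u hu => hpart' u _ hodd2 hD hu hP'v
        have := (exists_lt_transfer P' e (posSet_card e ha')
          (fun u => AdjN (ν u) (ν (e (((posSet P' e).orderIsoOfFin (posSet_card e ha') i2 : Fin m)))))
          hA i2).mp ⟨i', hlt, hadj⟩
        obtain ⟨x', hx'lt, hx'adj⟩ := this
        refine ⟨x', hx'lt, ?_⟩
        rw [hco i2]
        exact hx'adj
  have bwd : ∀ (P' : α → Prop) (instP : DecidablePred P') (a' : ℕ)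
      (ha' : Fintype.card {v // P' v} = a')
      (hpart' : ∀ u v : α, Odd (ν v) → ¬ D v → AdjN (ν u) (ν v) → P' v → P' u)
      (D' : {v // P' v} → Prop) (hD' : ∀ x : {v // P' v}, D' x ↔ D x.1),
      QX (fun x => ν x.1) D' (compOf P' e (posSet_card e ha')) →
      ∀ i : Fin m, Odd (ν (e i)) → ¬ D (e i) → P' (e i) →
        ∃ i', i' < i ∧ AdjN (ν (e i')) (ν (e i)) := by
    intro P' instP a' ha' hpart' D' hD' hQ1 i hodd hnD hP'
    have hco : ∀ y, ((compOf P' e (posSet_card e ha') y : α)) =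
        e (((posSet P' e).orderIsoOfFin (posSet_card e ha') y : Fin m)) :=
      fun y => compOf_coe P' e (posSet_card e ha') y
    have hmem : i ∈ posSet P' e := mem_posSet.mpr hP'
    obtain ⟨x, hx⟩ := orderIsoOfFin_surj (posSet_card e ha') hmem
    have hodd' : Odd (ν ((compOf P' e (posSet_card e ha') x).1)) := by
      rw [hco, hx]; exact hodd
    rcases hQ1 x hodd' with hD3 | ⟨x', hlt, hadj⟩
    · exfalso
      rw [hD', hco, hx] at hD3
      exact hnD hD3
    · have hA : ∀ u : α, (AdjN (ν u) (ν (e i))) → P' u :=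
        fun u hu => hpart' u _ hodd hnD hu hP'
      have hadj2 : AdjN (ν ((compOf P' e (posSet_card e ha') x') : α)) (ν (e i)) := by
        simp only [] at hadj
        rwa [hco x, hx] at hadj
      have := (exists_lt_transfer P' e (posSet_card e ha')
        (fun u => AdjN (ν u) (ν (e i))) hA x).mpr ⟨x', hlt, hadj2⟩
      rw [hx] at this
      exact this
  constructor
  · intro hQ
    constructor
    · exact fwd P _ a ha (fun u v h1 h2 h3 h4 => (hpart u v h1 h2 h3).mp h4) D1 hD1 hQ
    · exact fwd (fun v => ¬ P v) _ b hb
        (fun u v h1 h2 h3 h4 => fun hPu => h4 ((hpart u v h1 h2 h3).mpr hPu)) D2 hD2 hQ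
  · rintro ⟨h1, h2⟩ i hodd
    by_cases hD : D (e i)
    · exact Or.inl hD
    · right
      by_cases hP : P (e i)
      · exact bwd P _ a ha (fun u v x1 x2 x3 x4 => (hpart u v x1 x2 x3).mp x4) D1 hD1 h1
          i hodd hD hP
      · exact bwd (fun v => ¬ P v) _ b hb
          (fun u v x1 x2 x3 x4 => fun hPu => x4 ((hpart u v x1 x2 x3).mpr hPu)) D2 hD2 h2
          i hodd hD hP

lemma QX_count_true {α : Type*} (ν : α → ℕ) {t : ℕ} [Fintype α] [DecidableEq α]
    (hcard : Fintype.card α = t) :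
    Nat.card {e : Fin t ≃ α // QX ν (fun _ => True) e} = t.factorial := by
  have h1 : Nat.card {e : Fin t ≃ α // QX ν (fun _ => True) e} = Nat.card (Fin t ≃ α) :=
    Nat.card_congr (Equiv.subtypeUnivEquiv (fun e i _ => Or.inl trivial))
  rw [h1, Nat.card_eq_fintype_card,
    Fintype.card_equiv (Fintype.equivOfCardEq (by rw [hcard, Fintype.card_fin])), Fintype.card_fin]

lemma Qp_iff_QX (t : ℕ) (π : Equiv.Perm (Fin t)) :
    Qp t π ↔ QX (fun x : Fin t => (x : ℕ)) (fun _ => False) π := by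
  constructor
  · intro h i hodd
    obtain ⟨j', hj, hadj⟩ := h i hodd
    exact Or.inr ⟨j', hj, hadj⟩
  · intro h i hodd
    rcases h i hodd with hF | ⟨j', hj, hadj⟩
    · exact absurd hF not_false
    · exact ⟨j', hj, hadj⟩

lemma QX_count_relabel {α : Type*} (ν : α → ℕ) {t : ℕ} (r : α ≃ Fin t)
    (hodd : ∀ x, Odd ((r x : Fin t) : ℕ) ↔ Odd (ν x))
    (hadj : ∀ x y, AdjN ((r x : Fin t) : ℕ) ((r y : Fin t) : ℕ) ↔ AdjN (ν x) (ν y)) :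
    Nat.card {e : Fin t ≃ α // QX ν (fun _ => False) e} = g t := by
  unfold g
  apply Nat.card_congr
  refine Equiv.subtypeEquiv (Equiv.equivCongr (Equiv.refl (Fin t)) r) ?_
  intro e
  have happ : ∀ i, (Equiv.equivCongr (Equiv.refl (Fin t)) r e) i = r (e i) := fun i => rfl
  rw [Qp_iff_QX]
  constructor
  · intro h i hodd'
    have : Odd (ν (e i)) := by
      rw [← hodd]
      rw [happ] at hodd'
      exact hodd'
    rcases h i this with hF | ⟨i', hlt, ha⟩
    · exact absurd hF not_false
    · refine Or.inr ⟨i', hlt, ?_⟩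
      rw [happ, happ]
      rw [hadj]
      exact ha
  · intro h i hodd'
    have : Odd (((Equiv.equivCongr (Equiv.refl (Fin t)) r e) i : Fin t) : ℕ) := by
      rw [happ, hodd]
      exact hodd'
    rcases h i this with hF | ⟨i', hlt, ha⟩
    · exact absurd hF not_false
    · refine Or.inr ⟨i', hlt, ?_⟩
      rw [happ, happ, hadj] at ha
      exact ha


instance (j x : ℕ) : Decidable (FreeP j x) := by unfold FreeP; infer_instance

lemma card_Vc (k : ℕ) (c : Fin (2 * k + 1)) :
    Fintype.card {v : Fin (2 * k + 1) // v ≠ c} = 2 * k := by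
  have h := Fintype.card_subtype_compl (fun v : Fin (2 * k + 1) => v = c)
  rw [Fintype.card_subtype_eq, Fintype.card_fin] at h
  have heq : Fintype.card {v : Fin (2 * k + 1) // v ≠ c} =
      Fintype.card {v : Fin (2 * k + 1) // ¬ v = c} := rfl
  rw [heq, h]
  omega

def rLeft (k j : ℕ) (c : Fin (2 * k + 1)) (hc : (c : ℕ) = 2 * j) :
    {w : {v : {v : Fin (2 * k + 1) // v ≠ c} //
      ¬ FreeP j ((v.1 : Fin (2 * k + 1)) : ℕ)} //
      ((w.1.1 : Fin (2 * k + 1)) : ℕ) + 1 < 2 * j} ≃ Fin (2 * j - 1) := {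
  toFun := fun x => ⟨((x.1.1 : Fin (2 * k + 1)) : ℕ), by have := x.2; omega⟩
  invFun := fun y => ⟨⟨⟨⟨(y : ℕ), by have := y.isLt; omega⟩, by
      intro h
      have h2 : (y : ℕ) = 2 * j := (congrArg Fin.val h).trans hc
      have := y.isLt
      omega⟩, by
      unfold FreeP
      have := y.isLt
      show ¬((y : ℕ) + 1 = 2 * j ∨ (y : ℕ) = 2 * j + 1)
      omega⟩, by
      have := y.isLt
      show (y : ℕ) + 1 < 2 * j
      omega⟩
  left_inv := fun x => by
    apply Subtype.ext; apply Subtype.ext; apply Subtype.ext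
    rfl
  right_inv := fun y => by apply Fin.ext; rfl }

lemma rLeft_coe (k j : ℕ) (c : Fin (2 * k + 1)) (hc : (c : ℕ) = 2 * j) (x) :
    ((rLeft k j c hc x : Fin (2 * j - 1)) : ℕ) = ((x.1.1 : Fin (2 * k + 1)) : ℕ) := rfl

def rRight (k j : ℕ) (c : Fin (2 * k + 1)) (hc : (c : ℕ) = 2 * j) :
    {w : {v : {v : Fin (2 * k + 1) // v ≠ c} //
      ¬ FreeP j ((v.1 : Fin (2 * k + 1)) : ℕ)} //
      ¬ (((w.1.1 : Fin (2 * k + 1)) : ℕ) + 1 < 2 * j)} ≃ Fin (2 * k - 2 * j - 1) := {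
  toFun := fun x => ⟨((x.1.1 : Fin (2 * k + 1)) : ℕ) - (2 * j + 2), by
    have h1 := x.2
    have h2 : ¬ FreeP j ((x.1.1 : Fin (2 * k + 1)) : ℕ) := x.1.2
    have h3 : ((x.1.1 : Fin (2 * k + 1)) : ℕ) ≠ 2 * j := by
      intro h
      exact x.1.1.2 (Fin.ext (h.trans hc.symm))
    have h4 := (x.1.1.1 : Fin (2 * k + 1)).isLt
    unfold FreeP at h2
    omega⟩
  invFun := fun y => ⟨⟨⟨⟨(y : ℕ) + 2 * j + 2, by have := y.isLt; omega⟩, by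
      intro h
      have h2 : (y : ℕ) + 2 * j + 2 = 2 * j := (congrArg Fin.val h).trans hc
      omega⟩, by
      unfold FreeP
      show ¬((y : ℕ) + 2 * j + 2 + 1 = 2 * j ∨ (y : ℕ) + 2 * j + 2 = 2 * j + 1)
      omega⟩, by
      show ¬((y : ℕ) + 2 * j + 2 + 1 < 2 * j)
      omega⟩
  left_inv := fun x => by
    have h1 := x.2
    have h2 : ¬ FreeP j ((x.1.1 : Fin (2 * k + 1)) : ℕ) := x.1.2
    have h3 : ((x.1.1 : Fin (2 * k + 1)) : ℕ) ≠ 2 * j := by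
      intro h
      exact x.1.1.2 (Fin.ext (h.trans hc.symm))
    apply Subtype.ext; apply Subtype.ext; apply Subtype.ext; apply Fin.ext
    show ((x.1.1 : Fin (2 * k + 1)) : ℕ) - (2 * j + 2) + 2 * j + 2 =
      ((x.1.1 : Fin (2 * k + 1)) : ℕ)
    unfold FreeP at h2
    omega
  right_inv := fun y => by
    apply Fin.ext
    show (y : ℕ) + 2 * j + 2 - (2 * j + 2) = (y : ℕ)
    omega }

lemma rRight_coe (k j : ℕ) (c : Fin (2 * k + 1)) (hc : (c : ℕ) = 2 * j) (x) :
    ((rRight k j c hc x : Fin (2 * k - 2 * j - 1)) : ℕ) =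
      ((x.1.1 : Fin (2 * k + 1)) : ℕ) - (2 * j + 2) := rfl


lemma NJ (k j fj : ℕ) (c : Fin (2 * k + 1)) (hc : (c : ℕ) = 2 * j)
    (hfree : Fintype.card {v : {v : Fin (2 * k + 1) // v ≠ c} //
      FreeP j ((v.1 : Fin (2 * k + 1)) : ℕ)} = fj) :
    Nat.card {π : Equiv.Perm (Fin (2 * k + 1)) // Qp (2 * k + 1) π ∧ π 0 = c} =
      (2 * k).choose fj * (fj.factorial *
        ((2 * k - fj).choose (2 * j - 1) * (g (2 * j - 1) * g (2 * k - 2 * j - 1)))) := by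
  classical
  have hjk : 2 * j ≤ 2 * k := by have := c.isLt; omega
  -- Step A: pass to orderings of the remaining vertices
  have stepA : Nat.card {π : Equiv.Perm (Fin (2 * k + 1)) // Qp (2 * k + 1) π ∧ π 0 = c} =
      Nat.card {e : Fin (2 * k) ≃ {v : Fin (2 * k + 1) // v ≠ c} //
        QX (fun v : {v : Fin (2 * k + 1) // v ≠ c} => ((v : Fin (2 * k + 1)) : ℕ))
          (fun v : {v : Fin (2 * k + 1) // v ≠ c} => FreeP j ((v : Fin (2 * k + 1)) : ℕ)) e} := by
    apply Nat.card_congr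
    have E1 : {π : Equiv.Perm (Fin (2 * k + 1)) // Qp (2 * k + 1) π ∧ π 0 = c} ≃
        {π : Equiv.Perm (Fin (2 * k + 1)) // π 0 = c ∧ Qp (2 * k + 1) π} :=
      Equiv.subtypeEquivRight (fun π => and_comm)
    have E2 : {π : Equiv.Perm (Fin (2 * k + 1)) // π 0 = c ∧ Qp (2 * k + 1) π} ≃
        {x : {π : Equiv.Perm (Fin (2 * k + 1)) // π 0 = c} // Qp (2 * k + 1) x.1} :=
      (Equiv.subtypeSubtypeEquivSubtypeInter _ _).symm
    have E3 : {x : {π : Equiv.Perm (Fin (2 * k + 1)) // π 0 = c} // Qp (2 * k + 1) x.1} ≃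
        {e : Fin (2 * k) ≃ {v : Fin (2 * k + 1) // v ≠ c} // QV k j c e} :=
      Equiv.subtypeEquiv (EV (2 * k) c) (fun x => T1 k j c hc x)
    have E4 : {e : Fin (2 * k) ≃ {v : Fin (2 * k + 1) // v ≠ c} // QV k j c e} ≃
        {e : Fin (2 * k) ≃ {v : Fin (2 * k + 1) // v ≠ c} //
          QX (fun v : {v : Fin (2 * k + 1) // v ≠ c} => ((v : Fin (2 * k + 1)) : ℕ))
            (fun v : {v : Fin (2 * k + 1) // v ≠ c} => FreeP j ((v : Fin (2 * k + 1)) : ℕ)) e} :=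
      Equiv.subtypeEquivRight (fun e => Iff.rfl)
    exact ((E1.trans E2).trans E3).trans E4
  rw [stepA]
  -- Step B: first bin_count, splitting off the free vertices
  have hb1 : Fintype.card {v : {v : Fin (2 * k + 1) // v ≠ c} //
      ¬ FreeP j ((v.1 : Fin (2 * k + 1)) : ℕ)} = 2 * k - fj := by
    rw [Fintype.card_subtype_compl, hfree, card_Vc]
  have compat1 := fun e : Fin (2 * k) ≃ {v : Fin (2 * k + 1) // v ≠ c} =>
    compat_split (α := {v : Fin (2 * k + 1) // v ≠ c})
    (fun v : {v : Fin (2 * k + 1) // v ≠ c} => ((v : Fin (2 * k + 1)) : ℕ))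
    (fun v : {v : Fin (2 * k + 1) // v ≠ c} => FreeP j ((v : Fin (2 * k + 1)) : ℕ))
    (fun v : {v : Fin (2 * k + 1) // v ≠ c} => FreeP j ((v : Fin (2 * k + 1)) : ℕ))
    hfree hb1
    (fun _ => True) (fun _ => False)
    (fun x => iff_of_true trivial x.2) (fun x => iff_of_false not_false x.2)
    (by
      intro u v hodd hnD hadj
      rw [Nat.odd_iff] at hodd
      unfold AdjN at hadj
      unfold FreeP at hnD ⊢
      omega)
    e
  rw [bin_count (fun v : {v : Fin (2 * k + 1) // v ≠ c} =>
    FreeP j ((v : Fin (2 * k + 1)) : ℕ)) (card_Vc k c) hfree hb1 _ _ _ compat1]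
  -- the free part is unconstrained
  rw [QX_count_true (fun x : {v : {v : Fin (2 * k + 1) // v ≠ c} //
    FreeP j ((v.1 : Fin (2 * k + 1)) : ℕ)} => ((x.1 : Fin (2 * k + 1)) : ℕ)) hfree]
  -- Step C: second bin_count, splitting left and right
  -- relabel equivalences for left and right parts
  have haL : Fintype.card {w : {v : {v : Fin (2 * k + 1) // v ≠ c} //
      ¬ FreeP j ((v.1 : Fin (2 * k + 1)) : ℕ)} //
      ((w.1.1 : Fin (2 * k + 1)) : ℕ) + 1 < 2 * j} = 2 * j - 1 := by
    rw [Fintype.card_congr (rLeft k j c hc), Fintype.card_fin]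
  have hbR : Fintype.card {w : {v : {v : Fin (2 * k + 1) // v ≠ c} //
      ¬ FreeP j ((v.1 : Fin (2 * k + 1)) : ℕ)} //
      ¬ (((w.1.1 : Fin (2 * k + 1)) : ℕ) + 1 < 2 * j)} = 2 * k - 2 * j - 1 := by
    rw [Fintype.card_congr (rRight k j c hc), Fintype.card_fin]
  have compat2 := fun e : Fin (2 * k - fj) ≃ {v : {v : Fin (2 * k + 1) // v ≠ c} //
      ¬ FreeP j ((v.1 : Fin (2 * k + 1)) : ℕ)} =>
    compat_split (α := {v : {v : Fin (2 * k + 1) // v ≠ c} //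
      ¬ FreeP j ((v.1 : Fin (2 * k + 1)) : ℕ)})
    (fun w : {v : {v : Fin (2 * k + 1) // v ≠ c} //
      ¬ FreeP j ((v.1 : Fin (2 * k + 1)) : ℕ)} => ((w.1 : Fin (2 * k + 1)) : ℕ))
    (fun _ => False)
    (fun w : {v : {v : Fin (2 * k + 1) // v ≠ c} //
      ¬ FreeP j ((v.1 : Fin (2 * k + 1)) : ℕ)} => ((w.1 : Fin (2 * k + 1)) : ℕ) + 1 < 2 * j)
    haL hbR
    (fun _ => False) (fun _ => False)
    (fun _ => Iff.rfl) (fun _ => Iff.rfl)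
    (by
      intro u v hodd _ hadj
      have hu2 : ¬ FreeP j ((u.1 : Fin (2 * k + 1)) : ℕ) := u.2
      have hv2 : ¬ FreeP j ((v.1 : Fin (2 * k + 1)) : ℕ) := v.2
      have hu3 : ((u.1 : Fin (2 * k + 1)) : ℕ) ≠ 2 * j := by
        intro h
        exact u.1.2 (Fin.ext (h.trans hc.symm))
      have hv3 : ((v.1 : Fin (2 * k + 1)) : ℕ) ≠ 2 * j := by
        intro h
        exact v.1.2 (Fin.ext (h.trans hc.symm))
      rw [Nat.odd_iff] at hodd
      unfold AdjN at hadj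
      unfold FreeP at hu2 hv2
      omega)
    e
  rw [bin_count (fun w : {v : {v : Fin (2 * k + 1) // v ≠ c} //
    ¬ FreeP j ((v.1 : Fin (2 * k + 1)) : ℕ)} => ((w.1 : Fin (2 * k + 1)) : ℕ) + 1 < 2 * j)
    hb1 haL hbR _ _ _ compat2]
  -- Step D: relabel the two parts
  have hgL := QX_count_relabel (ν := fun x : {w : {v : {v : Fin (2 * k + 1) // v ≠ c} //
      ¬ FreeP j ((v.1 : Fin (2 * k + 1)) : ℕ)} //
      ((w.1.1 : Fin (2 * k + 1)) : ℕ) + 1 < 2 * j} => ((x.1.1 : Fin (2 * k + 1)) : ℕ))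
    (rLeft k j c hc)
    (fun x => by rw [rLeft_coe])
    (fun x y => by rw [rLeft_coe, rLeft_coe])
  have hgR := QX_count_relabel (ν := fun x : {w : {v : {v : Fin (2 * k + 1) // v ≠ c} //
      ¬ FreeP j ((v.1 : Fin (2 * k + 1)) : ℕ)} //
      ¬ (((w.1.1 : Fin (2 * k + 1)) : ℕ) + 1 < 2 * j)} => ((x.1.1 : Fin (2 * k + 1)) : ℕ))
    (rRight k j c hc)
    (by
      intro x
      have h1 := x.2
      have h2 : ¬ FreeP j ((x.1.1 : Fin (2 * k + 1)) : ℕ) := x.1.2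
      have h3 : ((x.1.1 : Fin (2 * k + 1)) : ℕ) ≠ 2 * j := by
        intro h
        exact x.1.1.2 (Fin.ext (h.trans hc.symm))
      rw [rRight_coe]
      rw [Nat.odd_iff, Nat.odd_iff]
      unfold FreeP at h2
      omega)
    (by
      intro x y
      have hx1 := x.2
      have hx2 : ¬ FreeP j ((x.1.1 : Fin (2 * k + 1)) : ℕ) := x.1.2
      have hx3 : ((x.1.1 : Fin (2 * k + 1)) : ℕ) ≠ 2 * j := by
        intro h
        exact x.1.1.2 (Fin.ext (h.trans hc.symm))
      have hy1 := y.2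
      have hy2 : ¬ FreeP j ((y.1.1 : Fin (2 * k + 1)) : ℕ) := y.1.2
      have hy3 : ((y.1.1 : Fin (2 * k + 1)) : ℕ) ≠ 2 * j := by
        intro h
        exact y.1.1.2 (Fin.ext (h.trans hc.symm))
      rw [rRight_coe, rRight_coe]
      unfold AdjN
      unfold FreeP at hx2 hy2
      omega)
  rw [hgL, hgR]


lemma card_free_edge0 (k : ℕ) (hk : 1 ≤ k) (c : Fin (2 * k + 1)) (hc : (c : ℕ) = 2 * 0) :
    Fintype.card {v : {v : Fin (2 * k + 1) // v ≠ c} //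
      FreeP 0 ((v.1 : Fin (2 * k + 1)) : ℕ)} = 1 := by
  rw [Fintype.card_eq_one_iff]
  refine ⟨⟨⟨⟨1, by omega⟩, ?_⟩, ?_⟩, ?_⟩
  · intro h
    have h2 : (1 : ℕ) = 2 * 0 := (congrArg Fin.val h).trans hc
    omega
  · unfold FreeP
    show 1 + 1 = 2 * 0 ∨ 1 = 2 * 0 + 1
    omega
  · intro y
    have hy := y.2
    unfold FreeP at hy
    apply Subtype.ext; apply Subtype.ext; apply Fin.ext
    show ((y.1.1 : Fin (2 * k + 1)) : ℕ) = 1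
    omega

lemma card_free_edgek (k : ℕ) (hk : 1 ≤ k) (c : Fin (2 * k + 1)) (hc : (c : ℕ) = 2 * k) :
    Fintype.card {v : {v : Fin (2 * k + 1) // v ≠ c} //
      FreeP k ((v.1 : Fin (2 * k + 1)) : ℕ)} = 1 := by
  rw [Fintype.card_eq_one_iff]
  refine ⟨⟨⟨⟨2 * k - 1, by omega⟩, ?_⟩, ?_⟩, ?_⟩
  · intro h
    have h2 : (2 * k - 1 : ℕ) = 2 * k := (congrArg Fin.val h).trans hc
    omega
  · unfold FreeP
    show 2 * k - 1 + 1 = 2 * k ∨ 2 * k - 1 = 2 * k + 1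
    omega
  · intro y
    have hy := y.2
    have hlt := (y.1.1 : Fin (2 * k + 1)).isLt
    unfold FreeP at hy
    apply Subtype.ext; apply Subtype.ext; apply Fin.ext
    show ((y.1.1 : Fin (2 * k + 1)) : ℕ) = 2 * k - 1
    omega

lemma card_free_mid (k j : ℕ) (h1 : 1 ≤ j) (h2 : j < k) (c : Fin (2 * k + 1))
    (hc : (c : ℕ) = 2 * j) :
    Fintype.card {v : {v : Fin (2 * k + 1) // v ≠ c} //
      FreeP j ((v.1 : Fin (2 * k + 1)) : ℕ)} = 2 := by
  have e : {v : {v : Fin (2 * k + 1) // v ≠ c} //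
      FreeP j ((v.1 : Fin (2 * k + 1)) : ℕ)} ≃ Fin 2 := {
    toFun := fun x => ⟨(((x.1.1 : Fin (2 * k + 1)) : ℕ) + 1 - 2 * j) / 2, by
      have hfx := x.2
      unfold FreeP at hfx
      omega⟩
    invFun := fun y => ⟨⟨⟨2 * j - 1 + 2 * (y : ℕ), by have := y.isLt; omega⟩, fun h => by
        have h3 : (2 * j - 1 + 2 * (y : ℕ) : ℕ) = 2 * j := (congrArg Fin.val h).trans hc
        have := y.isLt
        omega⟩, by
        unfold FreeP
        show 2 * j - 1 + 2 * (y : ℕ) + 1 = 2 * j ∨ 2 * j - 1 + 2 * (y : ℕ) = 2 * j + 1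
        have := y.isLt
        omega⟩
    left_inv := fun x => by
      have hfx := x.2
      unfold FreeP at hfx
      apply Subtype.ext; apply Subtype.ext; apply Fin.ext
      show (2 * j - 1 + 2 * ((((x.1.1 : Fin (2 * k + 1)) : ℕ) + 1 - 2 * j) / 2) : ℕ) =
        ((x.1.1 : Fin (2 * k + 1)) : ℕ)
      omega
    right_inv := fun y => by
      apply Fin.ext
      show (2 * j - 1 + 2 * (y : ℕ) + 1 - 2 * j) / 2 = (y : ℕ)
      have := y.isLt
      omega }
  rw [Fintype.card_congr e, Fintype.card_fin]

lemma g_zero : g 0 = 1 := by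
  unfold g
  have e : {π : Equiv.Perm (Fin 0) // Qp 0 π} ≃ Equiv.Perm (Fin 0) :=
    Equiv.subtypeUnivEquiv (fun π i => i.elim0)
  rw [Nat.card_congr e, Nat.card_eq_fintype_card, Fintype.card_perm, Fintype.card_fin]
  rfl

lemma g_one : g 1 = 1 := by
  unfold g
  have e : {π : Equiv.Perm (Fin 1) // Qp 1 π} ≃ Equiv.Perm (Fin 1) :=
    Equiv.subtypeUnivEquiv (fun π i hodd => by
      have := (π i).isLt
      rw [Nat.odd_iff] at hodd
      omega)
  rw [Nat.card_congr e, Nat.card_eq_fintype_card, Fintype.card_perm, Fintype.card_fin]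
  rfl

lemma natcard_sigma {ι : Type*} [Fintype ι] (gf : ι → Type*) [∀ i, Fintype (gf i)] :
    Nat.card (Σ i, gf i) = ∑ i, Nat.card (gf i) := by
  rw [Nat.card_eq_fintype_card, Fintype.card_sigma]
  exact Finset.sum_congr rfl (fun i _ => (Nat.card_eq_fintype_card).symm)

lemma partition (k : ℕ) : Nat.card {π : Equiv.Perm (Fin (2 * k + 1)) // Qp (2 * k + 1) π} =
    ∑ j ∈ Finset.range (k + 1),
      Nat.card {π : Equiv.Perm (Fin (2 * k + 1)) // Qp (2 * k + 1) π ∧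
        ((π 0 : Fin (2 * k + 1)) : ℕ) = 2 * j} := by
  classical
  set F : {π : Equiv.Perm (Fin (2 * k + 1)) // Qp (2 * k + 1) π} → Fin (k + 1) :=
    fun x => ⟨((x.1 0 : Fin (2 * k + 1)) : ℕ) / 2, by
      have := (x.1 0).isLt; omega⟩ with hF
  rw [Nat.card_congr (Equiv.sigmaFiberEquiv F).symm, natcard_sigma]
  rw [← Fin.sum_univ_eq_sum_range]
  apply Finset.sum_congr rfl
  intro j _
  apply Nat.card_congr
  have heven : ∀ π : Equiv.Perm (Fin (2 * k + 1)), Qp (2 * k + 1) π →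
      ((π 0 : Fin (2 * k + 1)) : ℕ) % 2 = 0 := by
    intro π hq
    by_contra hodd
    obtain ⟨j', hj', _⟩ := hq 0 (Nat.odd_iff.mpr (by omega))
    exact absurd (show (j' : ℕ) < 0 from hj') (by omega)
  refine (Equiv.subtypeSubtypeEquivSubtypeInter (fun π => Qp (2 * k + 1) π)
    (fun π => (⟨((π 0 : Fin (2 * k + 1)) : ℕ) / 2, by have := (π 0).isLt; omega⟩ :
      Fin (k + 1)) = j)).trans (Equiv.subtypeEquivRight ?_)
  intro π
  constructor
  · rintro ⟨hq, hfib⟩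
    refine ⟨hq, ?_⟩
    have h2 : ((π 0 : Fin (2 * k + 1)) : ℕ) / 2 = (j : ℕ) := congrArg Fin.val hfib
    have := heven π hq
    omega
  · rintro ⟨hq, hval⟩
    refine ⟨hq, ?_⟩
    apply Fin.ext
    show ((π 0 : Fin (2 * k + 1)) : ℕ) / 2 = (j : ℕ)
    omega


lemma bridge (K : ℕ) (j : ℕ) (hle : j ≤ K) :
    Nat.card {π : Equiv.Perm (Fin (2 * K + 1)) // Qp (2 * K + 1) π ∧
      ((π 0 : Fin (2 * K + 1)) : ℕ) = 2 * j} =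
    Nat.card {π : Equiv.Perm (Fin (2 * K + 1)) // Qp (2 * K + 1) π ∧
      π 0 = (⟨2 * j, by omega⟩ : Fin (2 * K + 1))} := by
  apply Nat.card_congr
  apply Equiv.subtypeEquivRight
  intro π
  constructor
  · rintro ⟨hq, hv⟩
    exact ⟨hq, Fin.ext (show ((π 0 : Fin (2 * K + 1)) : ℕ) =
      ((⟨2 * j, by omega⟩ : Fin (2 * K + 1)) : ℕ) from hv)⟩
  · rintro ⟨hq, hv⟩
    refine ⟨hq, ?_⟩
    rw [hv]

lemma hC2 (K : ℕ) (hK : 1 ≤ K) : (2 * K).choose 2 * Nat.factorial 2 = 4 * K ^ 2 - 2 * K := by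
  rw [Nat.choose_two_right]
  have h1 : 2 * K * (2 * K - 1) = (K * (2 * K - 1)) * 2 := by ring
  rw [h1, Nat.mul_div_cancel _ (by norm_num)]
  show K * (2 * K - 1) * 2 = 4 * K ^ 2 - 2 * K
  refine (Nat.sub_eq_of_eq_add ?_).symm
  have h : 2 * K - 1 + 1 = 2 * K := by omega
  calc 4 * K ^ 2 = K * ((2 * K - 1) + 1) * 2 := by rw [h]; ring
    _ = K * (2 * K - 1) * 2 + 2 * K := by ring

theorem main_rec (k' : ℕ) :
    f (2 * (k' + 1) + 1) = 4 * (k' + 1) * f (2 * (k' + 1) - 1) +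
      (4 * (k' + 1) ^ 2 - 2 * (k' + 1)) *
        ∑ j ∈ Finset.Icc 1 (k' + 1 - 1),
          Nat.choose (2 * (k' + 1) - 2) (2 * j - 1) * f (2 * j - 1) *
            f (2 * (k' + 1) - 2 * j - 1) := by
  have hgf : g (2 * (k' + 1) - 1) = f (2 * (k' + 1) - 1) := by
    have h := f_eq_g k'
    have heq : 2 * k' + 1 = 2 * (k' + 1) - 1 := by omega
    rw [heq] at h
    exact h.symm
  have hgfj : ∀ j, 1 ≤ j → j ≤ k' → g (2 * j - 1) = f (2 * j - 1) := by
    intro j h1 _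
    have h := f_eq_g (j - 1)
    have heq : 2 * (j - 1) + 1 = 2 * j - 1 := by omega
    rw [heq] at h
    exact h.symm
  have hgfkj : ∀ j, 1 ≤ j → j ≤ k' → g (2 * (k' + 1) - 2 * j - 1) =
      f (2 * (k' + 1) - 2 * j - 1) := by
    intro j h1 h2
    have h := f_eq_g (k' - j)
    have heq : 2 * (k' - j) + 1 = 2 * (k' + 1) - 2 * j - 1 := by omega
    rw [heq] at h
    exact h.symm
  -- the three classes
  have hN0 : Nat.card {π : Equiv.Perm (Fin (2 * (k' + 1) + 1)) // Qp (2 * (k' + 1) + 1) π ∧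
      ((π 0 : Fin (2 * (k' + 1) + 1)) : ℕ) = 2 * 0} = 2 * (k' + 1) * f (2 * (k' + 1) - 1) := by
    rw [bridge (k' + 1) 0 (by omega)]
    rw [NJ (k' + 1) 0 1 _ rfl (card_free_edge0 (k' + 1) (by omega) _ rfl)]
    rw [show (2 * 0 - 1 : ℕ) = 0 by norm_num,
      show 2 * (k' + 1) - 2 * 0 - 1 = 2 * (k' + 1) - 1 by omega,
      hgf, g_zero, Nat.choose_zero_right, Nat.choose_one_right, Nat.factorial_one]
    ring
  have hNk : Nat.card {π : Equiv.Perm (Fin (2 * (k' + 1) + 1)) // Qp (2 * (k' + 1) + 1) π ∧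
      ((π 0 : Fin (2 * (k' + 1) + 1)) : ℕ) = 2 * (k' + 1)} =
      2 * (k' + 1) * f (2 * (k' + 1) - 1) := by
    rw [bridge (k' + 1) (k' + 1) le_rfl]
    rw [NJ (k' + 1) (k' + 1) 1 _ rfl (card_free_edgek (k' + 1) (by omega) _ rfl)]
    have hz : 2 * (k' + 1) - 2 * (k' + 1) - 1 = 0 := by omega
    rw [hz, g_zero, hgf, Nat.choose_self, Nat.choose_one_right, Nat.factorial_one]
    ring
  have hmid : ∀ j, 1 ≤ j → j ≤ k' →
      Nat.card {π : Equiv.Perm (Fin (2 * (k' + 1) + 1)) // Qp (2 * (k' + 1) + 1) π ∧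
        ((π 0 : Fin (2 * (k' + 1) + 1)) : ℕ) = 2 * j} =
      (4 * (k' + 1) ^ 2 - 2 * (k' + 1)) *
        (Nat.choose (2 * (k' + 1) - 2) (2 * j - 1) * f (2 * j - 1) *
          f (2 * (k' + 1) - 2 * j - 1)) := by
    intro j h1 h2
    rw [bridge (k' + 1) j (by omega)]
    rw [NJ (k' + 1) j 2 _ rfl (card_free_mid (k' + 1) j h1 (by omega) _ rfl)]
    rw [hgfj j h1 h2, hgfkj j h1 h2]
    calc (2 * (k' + 1)).choose 2 * (Nat.factorial 2 *
          ((2 * (k' + 1) - 2).choose (2 * j - 1) *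
            (f (2 * j - 1) * f (2 * (k' + 1) - 2 * j - 1))))
        = ((2 * (k' + 1)).choose 2 * Nat.factorial 2) *
          ((2 * (k' + 1) - 2).choose (2 * j - 1) *
            (f (2 * j - 1) * f (2 * (k' + 1) - 2 * j - 1))) := by ring
      _ = (4 * (k' + 1) ^ 2 - 2 * (k' + 1)) *
          ((2 * (k' + 1) - 2).choose (2 * j - 1) * f (2 * j - 1) *
            f (2 * (k' + 1) - 2 * j - 1)) := by rw [hC2 (k' + 1) (by omega)]; ring
  -- assemble
  have hfg2 : f (2 * (k' + 1) + 1) = g (2 * (k' + 1) + 1) := f_eq_g (k' + 1)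
  have hpart : g (2 * (k' + 1) + 1) =
      ∑ j ∈ Finset.range (k' + 1 + 1),
        Nat.card {π : Equiv.Perm (Fin (2 * (k' + 1) + 1)) // Qp (2 * (k' + 1) + 1) π ∧
          ((π 0 : Fin (2 * (k' + 1) + 1)) : ℕ) = 2 * j} := partition (k' + 1)
  rw [hfg2, hpart, Finset.sum_range_succ, Finset.sum_range_succ']
  rw [hN0, hNk]
  have hmidsum : ∑ i ∈ Finset.range k',
      Nat.card {π : Equiv.Perm (Fin (2 * (k' + 1) + 1)) // Qp (2 * (k' + 1) + 1) π ∧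
        ((π 0 : Fin (2 * (k' + 1) + 1)) : ℕ) = 2 * (i + 1)} =
      (4 * (k' + 1) ^ 2 - 2 * (k' + 1)) *
        ∑ j ∈ Finset.Icc 1 (k' + 1 - 1),
          Nat.choose (2 * (k' + 1) - 2) (2 * j - 1) * f (2 * j - 1) *
            f (2 * (k' + 1) - 2 * j - 1) := by
    have hIcc : Finset.Icc 1 (k' + 1 - 1) = Finset.Ico 1 (k' + 1) := by
      rw [Nat.add_sub_cancel, ← Finset.Ico_add_one_right_eq_Icc]
    rw [hIcc, Finset.sum_Ico_eq_sum_range]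
    have hk'' : k' + 1 - 1 = k' := by omega
    rw [hk'', Finset.mul_sum]
    apply Finset.sum_congr rfl
    intro i hi
    have hik : i < k' := Finset.mem_range.mp hi
    have h1i : 1 + i = i + 1 := by omega
    rw [h1i]
    exact hmid (i + 1) (by omega) (by omega)
  rw [hmidsum]
  ring

end WC

theorem worst_case_odd_recurrence :
    f 1 = 1 ∧
    ∀ k : ℕ, 1 ≤ k →
      f (2 * k + 1) = 4 * k * f (2 * k - 1) +
        (4 * k ^ 2 - 2 * k) *
          ∑ j ∈ Finset.Icc 1 (k - 1),
            Nat.choose (2 * k - 2) (2 * j - 1) * f (2 * j - 1) * f (2 * k - 2 * j - 1) := by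
  constructor
  · have h0 : f 1 = WC.g 1 := WC.f_eq_g 0
    rw [h0, WC.g_one]
  · intro k hk
    obtain ⟨k', rfl⟩ : ∃ k', k = k' + 1 := ⟨k - 1, by omega⟩
    exact WC.main_rec k'
end

section
/- For every integer n ≥ 1, the number of worst-case permutations of even length satisfies the convolution identity |F_{2n}| = Σ_{i=0}^{n} C(2n, 2i) · D(2i) · D(2n−2i), where C(a,b) denotes the binomial coefficient. -/
/- `D m`: the number of permutations `π ∈ S_m` for which `Γ(π)` is exactly the set of
   odd-labeled vertices `{1, 3, 5, ...}` (recall vertex `v : Fin m` has label `v + 1`). -/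
noncomputable def D (m : ℕ) : ℕ :=
  Nat.card {π : Equiv.Perm (Fin m) //
    GammaSet m π = Finset.univ.filter (fun v : Fin m => ((v : ℕ) + 1) % 2 = 1)}


def gmem {V : Type*} (G : SimpleGraph V) (r : V → ℕ) : V → Prop :=
  fun v => ∀ w, G.Adj w v → r w < r v → ¬ gmem G r w
termination_by v => r v
decreasing_by exact ‹r _ < r _›

theorem gmem_def {V : Type*} (G : SimpleGraph V) (r : V → ℕ) (v : V) :
    gmem G r v ↔ ∀ w, G.Adj w v → r w < r v → ¬ gmem G r w := by
  rw [gmem]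

open Classical in
theorem mem_domList_ofFn {N : ℕ} (G : SimpleGraph (Fin N)) (π : Equiv.Perm (Fin N)) (v : Fin N) :
    v ∈ domList G (List.ofFn fun i => π i) ↔ gmem G (fun u => ((π.symm u : ℕ))) v := by
  set r : Fin N → ℕ := fun u => ((π.symm u : ℕ)) with hr
  set F : Finset (Fin N) → Fin N → Finset (Fin N) :=
    fun D v => if ∃ w ∈ D, G.Adj w v then D else insert v D with hF
  have key : ∀ k, k ≤ N → ∀ v : Fin N,
      v ∈ ((List.ofFn fun i => π i).take k).foldl F ∅ ↔ gmem G r v ∧ r v < k := by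
    intro k
    induction k with
    | zero => intro _ v; simp
    | succ k IH =>
      intro hk v
      have hkN : k < N := hk
      have htake : (List.ofFn fun i => π i).take (k+1)
          = (List.ofFn fun i => π i).take k ++ [π ⟨k, hkN⟩] := by
        rw [List.take_succ]
        simp [List.getElem?_ofFn, hkN]
      rw [htake, List.foldl_append]
      set Dk := ((List.ofFn fun i => π i).take k).foldl F ∅ with hDk
      have IH' := IH (le_of_lt hkN)
      have hrk : r (π ⟨k, hkN⟩) = k := by simp [hr]
      have hcond : (∃ w ∈ Dk, G.Adj w (π ⟨k, hkN⟩)) ↔ ¬ gmem G r (π ⟨k, hkN⟩) := by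
        rw [gmem_def]
        push_neg
        constructor
        · rintro ⟨w, hwD, hadj⟩
          exact ⟨w, hadj, by rw [hrk]; exact ((IH' w).1 hwD).2, ((IH' w).1 hwD).1⟩
        · rintro ⟨w, hadj, hlt, hg⟩
          exact ⟨w, (IH' w).2 ⟨hg, by rwa [hrk] at hlt⟩, hadj⟩
      have hrinj : ∀ u : Fin N, r u = k → u = π ⟨k, hkN⟩ := by
        intro u hu
        have : π.symm u = ⟨k, hkN⟩ := Fin.ext hu
        rw [← this, Equiv.apply_symm_apply]
      by_cases hg : gmem G r (π ⟨k, hkN⟩)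
      · have : F Dk (π ⟨k, hkN⟩) = insert (π ⟨k, hkN⟩) Dk := by
          rw [hF]; exact if_neg (by rw [hcond]; exact not_not_intro hg)
        rw [List.foldl_cons, List.foldl_nil, this, Finset.mem_insert, IH' v]
        constructor
        · rintro (rfl | ⟨h1, h2⟩)
          · exact ⟨hg, by omega⟩
          · exact ⟨h1, by omega⟩
        · rintro ⟨h1, h2⟩
          rcases Nat.lt_succ_iff_lt_or_eq.1 h2 with h | h
          · exact Or.inr ⟨h1, h⟩
          · exact Or.inl (hrinj v h)
      · have : F Dk (π ⟨k, hkN⟩) = Dk := by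
          rw [hF]; exact if_pos (hcond.2 hg)
        rw [List.foldl_cons, List.foldl_nil, this, IH' v]
        constructor
        · rintro ⟨h1, h2⟩; exact ⟨h1, by omega⟩
        · rintro ⟨h1, h2⟩
          refine ⟨h1, ?_⟩
          rcases Nat.lt_succ_iff_lt_or_eq.1 h2 with h | h
          · exact h
          · exact absurd h1 (by rw [hrinj v h]; exact hg)
  have := key N le_rfl v
  rw [List.take_of_length_le (by simp)] at this
  have hlt : r v < N := (π.symm v).isLt
  rw [and_iff_left hlt] at this
  rw [domList]
  convert this

theorem mem_GammaSet_iff {N : ℕ} (π : Equiv.Perm (Fin N)) (v : Fin N) :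
    v ∈ GammaSet N π ↔ gmem (pathGraph N) (fun u => ((π.symm u : ℕ))) v :=
  mem_domList_ofFn _ π v

/-- Transport along an induced-subgraph embedding whose outside neighbors are never chosen. -/
theorem gmem_comap {V V' : Type*} (G : SimpleGraph V) (G' : SimpleGraph V')
    (e : V' → V) (r : V → ℕ)
    (hadj : ∀ a b, G'.Adj a b ↔ G.Adj (e a) (e b))
    (hout : ∀ a w, G.Adj w (e a) → r w < r (e a) → (∀ b, w ≠ e b) → ¬ gmem G r w) :
    ∀ a, gmem G' (fun a => r (e a)) a ↔ gmem G r (e a) := by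
  suffices H : ∀ k a, r (e a) = k → (gmem G' (fun a => r (e a)) a ↔ gmem G r (e a)) by
    intro a; exact H _ a rfl
  intro k
  induction k using Nat.strong_induction_on with
  | _ k IH =>
  intro a hk
  subst hk
  rw [gmem_def, gmem_def]
  constructor
  · intro h w hw hlt
    by_cases hw' : ∀ b, w ≠ e b
    · exact hout a w hw hlt hw'
    · push_neg at hw'
      obtain ⟨b, rfl⟩ := hw'
      rw [← IH _ hlt b rfl]
      exact h b ((hadj b a).2 hw) hlt
  · intro h b hb hlt
    rw [IH _ hlt b rfl]
    exact h (e b) ((hadj b a).1 hb) hlt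

/-- gmem only depends on the relative order of `r`. -/
theorem gmem_congr_order {V : Type*} (G : SimpleGraph V) (r r' : V → ℕ)
    (h : ∀ a b, r a < r b ↔ r' a < r' b) : ∀ v, gmem G r v ↔ gmem G r' v := by
  suffices H : ∀ k v, r v = k → (gmem G r v ↔ gmem G r' v) by
    intro v; exact H _ v rfl
  intro k
  induction k using Nat.strong_induction_on with
  | _ k IH =>
  intro v hk
  subst hk
  rw [gmem_def, gmem_def]
  constructor
  · intro hv w hw hlt
    rw [← IH (r w) ((h w v).2 hlt) w rfl]
    exact hv w hw ((h w v).2 hlt)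
  · intro hv w hw hlt
    rw [IH (r w) hlt w rfl]
    exact hv w hw ((h w v).1 hlt)

/-- Splitting along a cut all of whose endpoints are un-chosen (in the cut graph). -/
theorem gmem_split {V : Type*} (G G' : SimpleGraph V) (r : V → ℕ)
    (hsub : ∀ v w, G'.Adj v w → G.Adj v w)
    (hcut : ∀ v w, G.Adj w v → ¬ G'.Adj w v → ¬ gmem G' r w) :
    ∀ v, gmem G r v ↔ gmem G' r v := by
  suffices H : ∀ k v, r v = k → (gmem G r v ↔ gmem G' r v) by
    intro v; exact H _ v rfl
  intro k
  induction k using Nat.strong_induction_on with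
  | _ k IH =>
  intro v hk
  subst hk
  rw [gmem_def, gmem_def]
  constructor
  · intro hv w hw hlt
    rw [← IH (r w) hlt w rfl]
    exact hv w (hsub w v hw) hlt
  · intro hv w hw hlt
    by_cases hw' : G'.Adj w v
    · rw [IH (r w) hlt w rfl]
      exact hv w hw' hlt
    · rw [IH (r w) hlt w rfl]
      exact hcut v w hw hw'

theorem gmem_split' {V : Type*} (G G' : SimpleGraph V) (r : V → ℕ)
    (hsub : ∀ v w, G'.Adj v w → G.Adj v w)
    (hcut : ∀ v w, G.Adj w v → ¬ G'.Adj w v → ¬ gmem G r w) :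
    ∀ v, gmem G r v ↔ gmem G' r v := by
  suffices H : ∀ k v, r v = k → (gmem G r v ↔ gmem G' r v) by
    intro v; exact H _ v rfl
  intro k
  induction k using Nat.strong_induction_on with
  | _ k IH =>
  intro v hk
  subst hk
  rw [gmem_def, gmem_def]
  constructor
  · intro hv w hw hlt
    rw [← IH (r w) hlt w rfl]
    exact hv w (hsub w v hw) hlt
  · intro hv w hw hlt
    by_cases hw' : G'.Adj w v
    · rw [IH (r w) hlt w rfl]
      exact hv w hw' hlt
    · exact hcut v w hw hw'

/-- The candidate worst-case set with boundary `k`. -/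
def SB (N k : ℕ) : Finset (Fin N) :=
  Finset.univ.filter (fun v => ((v : ℕ) < k ↔ (v : ℕ) % 2 = 0))

theorem mem_SB {N k : ℕ} (v : Fin N) : v ∈ SB N k ↔ ((v : ℕ) < k ↔ (v : ℕ) % 2 = 0) := by
  simp [SB]

theorem card_SB (n i : ℕ) (hi : i ≤ n) : (SB (2*n) (2*i)).card = n := by
  classical
  have h : SB (2*n) (2*i) =
      Finset.univ.image (fun j : Fin n =>
        (⟨if (j : ℕ) < i then 2*(j:ℕ) else 2*(j:ℕ)+1, by split <;> omega⟩ : Fin (2*n))) := by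
    ext v
    simp only [mem_SB, Finset.mem_image, Finset.mem_univ, true_and]
    constructor
    · intro h
      refine ⟨⟨(v:ℕ)/2, by omega⟩, ?_⟩
      apply Fin.ext
      simp only []
      split <;> omega
    · rintro ⟨j, rfl⟩
      simp only []
      split <;> omega
  rw [h, Finset.card_image_of_injective _ ?_, Finset.card_univ, Fintype.card_fin]
  intro a b hab
  have := Fin.val_eq_val _ _ |>.2 hab
  simp only [] at this
  apply Fin.ext
  split at this <;> split at this <;> omega

theorem SB_injective (n : ℕ) : ∀ i ≤ n, ∀ j ≤ n, SB (2*n) (2*i) = SB (2*n) (2*j) → i = j := by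
  intro i hi j hj h
  by_contra hne
  wlog hij : i < j generalizing i j
  · exact this j hj i hi h.symm (Ne.symm hne) (by omega)
  have hv : (2*i : ℕ) < 2*n := by omega
  have h1 : (⟨2*i, hv⟩ : Fin (2*n)) ∈ SB (2*n) (2*j) := by
    rw [mem_SB]; simp only []; omega
  have h2 : (⟨2*i, hv⟩ : Fin (2*n)) ∉ SB (2*n) (2*i) := by
    rw [mem_SB]; simp only []; omega
  rw [h] at h2; exact h2 h1

/-- Any independent set of size `n` in the path on `2n` vertices is some `SB`. -/
theorem indep_structure (n : ℕ) (T : Finset (Fin (2*n)))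
    (hind : ∀ v ∈ T, ∀ w ∈ T, ¬ (pathGraph (2*n)).Adj v w)
    (hcard : T.card = n) : ∃ i ≤ n, T = SB (2*n) (2*i) := by
  classical
  -- elements of T in the same pair are equal
  have huniq : ∀ v ∈ T, ∀ w ∈ T, (v:ℕ)/2 = (w:ℕ)/2 → v = w := by
    intro v hv w hw hvw
    by_contra hne
    have hne' : (v:ℕ) ≠ (w:ℕ) := fun h => hne (Fin.ext h)
    exact hind v hv w hw (by simp only [pathGraph]; omega)
  -- each pair is hit
  have hsurj : ∀ p < n, ∃ v ∈ T, (v:ℕ)/2 = p := by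
    intro p hp
    by_contra hc
    push_neg at hc
    have hsub : T.image (fun v : Fin (2*n) => (v:ℕ)/2) ⊆ (Finset.range n).erase p := by
      intro x hx
      simp only [Finset.mem_image] at hx
      obtain ⟨v, hv, rfl⟩ := hx
      rw [Finset.mem_erase, Finset.mem_range]
      exact ⟨fun h => hc v hv h, by omega⟩
    have h1 : (T.image (fun v : Fin (2*n) => (v:ℕ)/2)).card = n := by
      rw [Finset.card_image_of_injOn, hcard]
      intro v hv w hw h
      exact huniq v hv w hw h
    have h2 := Finset.card_le_card hsub
    rw [h1, Finset.card_erase_of_mem (by simp [hp]), Finset.card_range] at h2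
    omega
  -- c p : the odd element of pair p is chosen
  set c : ℕ → Prop := fun p => ∃ v ∈ T, (v:ℕ) = 2*p+1 with hc
  have hcm : ∀ p, p + 1 < n → c p → c (p+1) := by
    rintro p hp ⟨v, hv, hvval⟩
    obtain ⟨w, hw, hwval⟩ := hsurj (p+1) hp
    have : (w:ℕ) = 2*(p+1) ∨ (w:ℕ) = 2*(p+1)+1 := by omega
    rcases this with h | h
    · exact absurd (hind v hv w hw) (by simp only [pathGraph, not_not]; omega)
    · exact ⟨w, hw, h⟩
  -- least p with c p, or n
  set i : ℕ := if h : ∃ p, p < n ∧ c p then Nat.find h else n with hidef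
  have hin : i ≤ n := by
    by_cases h : ∃ p, p < n ∧ c p
    · rw [hidef, dif_pos h]; exact le_of_lt (Nat.find_spec h).1
    · rw [hidef, dif_neg h]
  have hup : ∀ p, p < n → i ≤ p → c i → c p := by
    intro p
    induction p with
    | zero => intro _ hip hci; have : i = 0 := by omega
              exact this ▸ hci
    | succ q IH =>
      intro hp hip hcival
      rcases Nat.lt_or_ge q i with h | h
      · have : i = q + 1 := by omega
        exact this ▸ hcival
      · exact hcm q hp (IH (by omega) h hcival)
  have hci : ∀ p < n, (c p ↔ i ≤ p) := by
    intro p hp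
    constructor
    · intro hcp
      by_cases h : ∃ p, p < n ∧ c p
      · rw [hidef, dif_pos h]; exact Nat.find_le ⟨hp, hcp⟩
      · exact absurd ⟨p, hp, hcp⟩ h
    · intro hip
      have hbase : c i := by
        by_cases h : ∃ p, p < n ∧ c p
        · have hh : i = Nat.find h := by rw [hidef, dif_pos h]
          rw [hh]; exact (Nat.find_spec h).2
        · exfalso; rw [hidef, dif_neg h] at hip; omega
      exact hup p hp hip hbase
  refine ⟨i, hin, ?_⟩
  ext v
  rw [mem_SB]
  have hp : (v:ℕ)/2 < n := by omega
  by_cases hpar : (v:ℕ) % 2 = 0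
  · -- v even
    obtain ⟨w, hw, hww⟩ := hsurj _ hp
    constructor
    · intro hv
      have hnc : ¬ c ((v:ℕ)/2) := by
        rintro ⟨u, hu, huval⟩
        have : u = v := huniq u hu v hv (by omega)
        omega
      rw [hci _ hp] at hnc
      constructor
      · intro _; exact hpar
      · intro _; omega
    · intro hiff
      have hvlt : (v:ℕ) < 2*i := hiff.2 hpar
      have hnc : ¬ c ((v:ℕ)/2) := by
        rw [hci _ hp]; omega
      have : (w:ℕ) = 2*((v:ℕ)/2) ∨ (w:ℕ) = 2*((v:ℕ)/2)+1 := by omega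
      rcases this with h | h
      · have : w = v := Fin.ext (by omega)
        exact this ▸ hw
      · exact absurd ⟨w, hw, h⟩ hnc
  · -- v odd
    constructor
    · intro hv
      have hcv : c ((v:ℕ)/2) := ⟨v, hv, by omega⟩
      rw [hci _ hp] at hcv
      constructor
      · intro; omega
      · intro; omega
    · intro hiff
      have hge : ¬ ((v:ℕ) < 2*i) := fun h => by have := hiff.1 h; omega
      have hcv : c ((v:ℕ)/2) := by
        rw [hci _ hp]; omega
      obtain ⟨u, hu, huval⟩ := hcv
      have : u = v := Fin.ext (by omega)
      exact this ▸ hu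



theorem count_split (k m : ℕ)
    (A : (Fin k → ℕ) → Prop) (B : (Fin m → ℕ) → Prop)
    (hA : ∀ s s' : Fin k → ℕ, (∀ a b, s a < s b ↔ s' a < s' b) → (A s → A s'))
    (hB : ∀ s s' : Fin m → ℕ, (∀ a b, s a < s b ↔ s' a < s' b) → (B s → B s')) :
    Nat.card {ρ : Equiv.Perm (Fin (k+m)) //
        A (fun a => ((ρ (Fin.castAdd m a) : ℕ))) ∧ B (fun a => ((ρ (Fin.natAdd k a) : ℕ)))} =
      (k+m).choose k * Nat.card {σ : Equiv.Perm (Fin k) // A (fun a => ((σ a : ℕ)))}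
        * Nat.card {τ : Equiv.Perm (Fin m) // B (fun a => ((τ a : ℕ)))} := by
  classical
  set N := k + m with hN
  set P : Equiv.Perm (Fin N) → Prop := fun ρ =>
    A (fun a => ((ρ (Fin.castAdd m a) : ℕ))) ∧ B (fun a => ((ρ (Fin.natAdd k a) : ℕ))) with hP
  set Tmap : Equiv.Perm (Fin N) → Finset (Fin N) :=
    fun ρ => Finset.univ.image (fun a : Fin k => ρ (Fin.castAdd m a)) with hTmap
  have hTmem : ∀ ρ, Tmap ρ ∈ Finset.univ.powersetCard k := by
    intro ρ
    rw [Finset.mem_powersetCard]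
    refine ⟨Finset.subset_univ _, ?_⟩
    have hinj : Function.Injective (fun a : Fin k => ρ (Fin.castAdd m a)) :=
      fun a b h => Fin.castAdd_injective _ _ (ρ.injective h)
    rw [Finset.card_image_of_injective _ hinj, Finset.card_univ, Fintype.card_fin]
  have hcard1 : Nat.card {ρ : Equiv.Perm (Fin N) // P ρ} = (Finset.univ.filter P).card := by
    rw [Nat.card_eq_fintype_card, Fintype.card_subtype]
  rw [hcard1]
  rw [Finset.card_eq_sum_card_fiberwise (f := Tmap) (t := Finset.univ.powersetCard k)
    (fun ρ _ => hTmem ρ)]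
  have hterm : ∀ T ∈ Finset.univ.powersetCard k,
      ((Finset.univ.filter P).filter (fun ρ => Tmap ρ = T)).card =
        Nat.card {σ : Equiv.Perm (Fin k) // A (fun a => ((σ a : ℕ)))}
          * Nat.card {τ : Equiv.Perm (Fin m) // B (fun a => ((τ a : ℕ)))} := by
    intro T hT
    rw [Finset.mem_powersetCard] at hT
    have hTk : T.card = k := hT.2
    have hTc : Tᶜ.card = m := by
      rw [Finset.card_compl, hTk, Fintype.card_fin]; omega
    set eT : Fin k ↪o Fin N := (T.orderIsoOfFin hTk).toOrderEmbedding.trans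
      (OrderEmbedding.subtype _) with heT
    set eC : Fin m ↪o Fin N := (Tᶜ.orderIsoOfFin hTc).toOrderEmbedding.trans
      (OrderEmbedding.subtype _) with heC
    have heTmem : ∀ a, eT a ∈ T := fun a => (T.orderIsoOfFin hTk a).2
    have heCmem : ∀ a, eC a ∉ T := fun a => Finset.mem_compl.1 (Tᶜ.orderIsoOfFin hTc a).2
    -- the glued permutation
    have glbij : ∀ (σ : Equiv.Perm (Fin k)) (τ : Equiv.Perm (Fin m)),
        Function.Bijective (fun v : Fin N =>
          if h : (v : ℕ) < k then eT (σ ⟨v, h⟩) else eC (τ ⟨(v:ℕ) - k, by omega⟩)) := by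
      intro σ τ
      rw [← Finite.injective_iff_bijective]
      intro u v huv
      simp only [] at huv
      split_ifs at huv with h1 h2 h2
      · have := σ.injective (eT.injective huv)
        have := congrArg Fin.val this
        simp only [] at this
        exact Fin.ext this
      · exact absurd (huv ▸ heTmem _) (heCmem _)
      · exact absurd (huv.symm ▸ heTmem _) (heCmem _)
      · have := τ.injective (eC.injective huv)
        have := congrArg Fin.val this
        simp only [] at this
        apply Fin.ext
        omega
    set gl : Equiv.Perm (Fin k) → Equiv.Perm (Fin m) → Equiv.Perm (Fin N) :=
      fun σ τ => Equiv.ofBijective _ (glbij σ τ) with hgl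
    have hglL : ∀ σ τ (a : Fin k), gl σ τ (Fin.castAdd m a) = eT (σ a) := by
      intro σ τ a
      have h1 : ((Fin.castAdd m a : Fin N) : ℕ) = (a : ℕ) := rfl
      show (if h : ((Fin.castAdd m a : Fin N) : ℕ) < k then eT (σ ⟨_, h⟩) else _) = eT (σ a)
      rw [dif_pos (h1 ▸ a.isLt)]
      exact congrArg (fun x => eT (σ x)) (Fin.ext h1)
    have hglR : ∀ σ τ (a : Fin m), gl σ τ (Fin.natAdd k a) = eC (τ a) := by
      intro σ τ a
      have h1 : ((Fin.natAdd k a : Fin N) : ℕ) = k + (a : ℕ) := rfl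
      show (if h : ((Fin.natAdd k a : Fin N) : ℕ) < k then eT _ else eC (τ ⟨_, _⟩)) = eC (τ a)
      rw [dif_neg (by omega)]
      congr 1
      exact congrArg τ (Fin.ext (by simp only [Fin.coe_natAdd]; omega))
    -- the bijection between the fiber and pairs
    set Ψ : {σ : Equiv.Perm (Fin k) // A (fun a => ((σ a : ℕ)))}
        × {τ : Equiv.Perm (Fin m) // B (fun a => ((τ a : ℕ)))}
        → {ρ : Equiv.Perm (Fin N) // P ρ ∧ Tmap ρ = T} := by
      refine fun st => ⟨gl st.1.1 st.2.1, ⟨?_, ?_⟩, ?_⟩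
      · refine hA _ _ (fun a b => ?_) st.1.2
        rw [hglL, hglL]
        have : ∀ x y : Fin k, ((eT x : Fin N) : ℕ) < ((eT y : Fin N) : ℕ) ↔ (x:ℕ) < (y:ℕ) := by
          intro x y
          rw [← Fin.lt_iff_val_lt_val, ← Fin.lt_iff_val_lt_val, eT.lt_iff_lt]
        rw [this]
      · refine hB _ _ (fun a b => ?_) st.2.2
        rw [hglR, hglR]
        have : ∀ x y : Fin m, ((eC x : Fin N) : ℕ) < ((eC y : Fin N) : ℕ) ↔ (x:ℕ) < (y:ℕ) := by
          intro x y
          rw [← Fin.lt_iff_val_lt_val, ← Fin.lt_iff_val_lt_val, eC.lt_iff_lt]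
        rw [this]
      · ext u
        simp only [hTmap, Finset.mem_image, Finset.mem_univ, true_and]
        constructor
        · rintro ⟨a, rfl⟩
          rw [hglL]
          exact heTmem _
        · intro hu
          refine ⟨st.1.1.symm ((T.orderIsoOfFin hTk).symm ⟨u, hu⟩), ?_⟩
          rw [hglL, Equiv.apply_symm_apply]
          show ((T.orderIsoOfFin hTk) ((T.orderIsoOfFin hTk).symm ⟨u, hu⟩) : Fin N) = u
          rw [OrderIso.apply_symm_apply]
    have hΨbij : Function.Bijective Ψ := by
      constructor
      · rintro ⟨⟨σ, hσ⟩, ⟨τ, hτ⟩⟩ ⟨⟨σ', hσ'⟩, ⟨τ', hτ'⟩⟩ h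
        have h' : gl σ τ = gl σ' τ' := congrArg Subtype.val h
        have hσσ : σ = σ' := by
          ext a
          have := congrArg (fun ρ : Equiv.Perm (Fin N) => ρ (Fin.castAdd m a)) h'
          simp only [hglL] at this
          exact congrArg Fin.val (eT.injective this)
        have hττ : τ = τ' := by
          ext a
          have := congrArg (fun ρ : Equiv.Perm (Fin N) => ρ (Fin.natAdd k a)) h'
          simp only [hglR] at this
          exact congrArg Fin.val (eC.injective this)
        simp [hσσ, hττ]
      · rintro ⟨ρ, hPρ, hTρ⟩
        have memL : ∀ a : Fin k, ρ (Fin.castAdd m a) ∈ T := by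
          intro a
          rw [← hTρ]
          exact Finset.mem_image.2 ⟨a, Finset.mem_univ _, rfl⟩
        have memR : ∀ a : Fin m, ρ (Fin.natAdd k a) ∉ T := by
          intro a hmem
          rw [← hTρ] at hmem
          obtain ⟨b, _, hb⟩ := Finset.mem_image.1 hmem
          have := ρ.injective hb
          have := congrArg Fin.val this
          simp only [Fin.coe_castAdd, Fin.coe_natAdd] at this
          omega
        have hσ0 : Function.Bijective (fun a : Fin k =>
            (T.orderIsoOfFin hTk).symm ⟨ρ (Fin.castAdd m a), memL a⟩) := by
          rw [← Finite.injective_iff_bijective]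
          intro a b hab
          have h2 : ρ (Fin.castAdd m a) = ρ (Fin.castAdd m b) := by
            have := congrArg (fun x => (((T.orderIsoOfFin hTk) x : {x // x ∈ T}) : Fin N)) hab
            simpa using this
          have h3 := congrArg Fin.val (ρ.injective h2)
          simp only [Fin.coe_castAdd] at h3
          exact Fin.ext h3
        have hτ0 : Function.Bijective (fun a : Fin m =>
            (Tᶜ.orderIsoOfFin hTc).symm ⟨ρ (Fin.natAdd k a), Finset.mem_compl.2 (memR a)⟩) := by
          rw [← Finite.injective_iff_bijective]
          intro a b hab
          have h2 : ρ (Fin.natAdd k a) = ρ (Fin.natAdd k b) := by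
            have := congrArg (fun x => (((Tᶜ.orderIsoOfFin hTc) x : {x // x ∈ Tᶜ}) : Fin N)) hab
            simpa using this
          have h3 := congrArg Fin.val (ρ.injective h2)
          simp only [Fin.coe_natAdd] at h3
          apply Fin.ext
          omega
        set σ := Equiv.ofBijective _ hσ0 with hσdef
        set τ := Equiv.ofBijective _ hτ0 with hτdef
        have heTσ : ∀ a, eT (σ a) = ρ (Fin.castAdd m a) := by
          intro a
          show ((T.orderIsoOfFin hTk) ((T.orderIsoOfFin hTk).symm ⟨ρ (Fin.castAdd m a), memL a⟩)
            : Fin N) = _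
          rw [OrderIso.apply_symm_apply]
        have heCτ : ∀ a, eC (τ a) = ρ (Fin.natAdd k a) := by
          intro a
          show ((Tᶜ.orderIsoOfFin hTc) ((Tᶜ.orderIsoOfFin hTc).symm
            ⟨ρ (Fin.natAdd k a), Finset.mem_compl.2 (memR a)⟩) : Fin N) = _
          rw [OrderIso.apply_symm_apply]
        have hglρ : gl σ τ = ρ := by
          apply Equiv.ext
          intro v
          show (if h : (v : ℕ) < k then eT (σ ⟨v, h⟩) else eC (τ ⟨(v:ℕ) - k, by omega⟩)) = ρ v
          split_ifs with h
          · rw [heTσ]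
            exact congrArg ρ (Fin.ext rfl)
          · rw [heCτ]
            congr 1
            apply Fin.ext
            show k + ((v:ℕ) - k) = (v : ℕ)
            omega
        refine ⟨⟨⟨σ, ?_⟩, ⟨τ, ?_⟩⟩, ?_⟩
        · refine hA _ _ (fun a b => ?_) hPρ.1
          have : ∀ a, ((ρ (Fin.castAdd m a)) : ℕ) = ((eT (σ a) : Fin N) : ℕ) := by
            intro a; rw [heTσ]
          rw [this, this]
          rw [← Fin.lt_iff_val_lt_val, ← Fin.lt_iff_val_lt_val, eT.lt_iff_lt]
        · refine hB _ _ (fun a b => ?_) hPρ.2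
          have : ∀ a, ((ρ (Fin.natAdd k a)) : ℕ) = ((eC (τ a) : Fin N) : ℕ) := by
            intro a; rw [heCτ]
          rw [this, this]
          rw [← Fin.lt_iff_val_lt_val, ← Fin.lt_iff_val_lt_val, eC.lt_iff_lt]
        · exact Subtype.ext hglρ
    have : ((Finset.univ.filter P).filter (fun ρ => Tmap ρ = T)).card
        = Nat.card {ρ : Equiv.Perm (Fin N) // P ρ ∧ Tmap ρ = T} := by
      rw [Nat.card_eq_fintype_card, Fintype.card_subtype, Finset.filter_filter]
    rw [this, ← Nat.card_congr (Equiv.ofBijective Ψ hΨbij), Nat.card_prod]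
  rw [Finset.sum_congr rfl hterm, Finset.sum_const, Finset.card_powersetCard,
    Finset.card_univ, Fintype.card_fin, smul_eq_mul, mul_assoc]



/-- Evenness target condition on the left block. -/
def QE (k : ℕ) (s : Fin k → ℕ) : Prop :=
  ∀ a : Fin k, gmem (pathGraph k) s a ↔ (a : ℕ) % 2 = 0

/-- Oddness target condition on the right block. -/
def QO (k : ℕ) (s : Fin k → ℕ) : Prop :=
  ∀ a : Fin k, gmem (pathGraph k) s a ↔ (a : ℕ) % 2 = 1

theorem QE_inv (k : ℕ) : ∀ s s' : Fin k → ℕ,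
    (∀ a b, s a < s b ↔ s' a < s' b) → QE k s → QE k s' := by
  intro s s' h hs a
  rw [← gmem_congr_order (pathGraph k) s s' h a]
  exact hs a

theorem QO_inv (k : ℕ) : ∀ s s' : Fin k → ℕ,
    (∀ a b, s a < s b ↔ s' a < s' b) → QO k s → QO k s' := by
  intro s s' h hs a
  rw [← gmem_congr_order (pathGraph k) s s' h a]
  exact hs a

/-- `symm` as a permutation of permutations. -/
def symmE {α : Type*} : Equiv.Perm α ≃ Equiv.Perm α :=
  ⟨Equiv.symm, Equiv.symm, fun _ => Equiv.symm_symm _, fun _ => Equiv.symm_symm _⟩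

theorem D_eq_QE (k : ℕ) :
    D k = Nat.card {σ : Equiv.Perm (Fin k) // QE k (fun a => ((σ a : ℕ)))} := by
  rw [D]
  refine Nat.card_congr (symmE.subtypeEquiv ?_)
  intro π
  show GammaSet k π = _ ↔ QE k (fun a => ((π.symm a : ℕ)))
  rw [Finset.ext_iff]
  constructor
  · intro h a
    have := h a
    rw [mem_GammaSet_iff] at this
    simp only [Finset.mem_filter, Finset.mem_univ, true_and] at this
    rw [this]
    omega
  · intro h v
    rw [mem_GammaSet_iff]
    simp only [Finset.mem_filter, Finset.mem_univ, true_and]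
    rw [h v]
    omega

theorem QO_card_eq (m : ℕ) (hm : m % 2 = 0) :
    Nat.card {τ : Equiv.Perm (Fin m) // QO m (fun a => ((τ a : ℕ)))} =
      Nat.card {σ : Equiv.Perm (Fin m) // QE m (fun a => ((σ a : ℕ)))} := by
  have hrevE : ∀ τ : Equiv.Perm (Fin m),
      Fin.revPerm.trans (Fin.revPerm.trans τ) = τ := by
    intro τ
    apply Equiv.ext
    intro a
    show τ (Fin.rev (Fin.rev a)) = τ a
    rw [Fin.rev_rev]
  have eE : Equiv.Perm (Fin m) ≃ Equiv.Perm (Fin m) :=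
    ⟨fun τ => Fin.revPerm.trans τ, fun τ => Fin.revPerm.trans τ, hrevE, hrevE⟩
  refine Nat.card_congr (Equiv.subtypeEquiv
    ⟨fun τ => Fin.revPerm.trans τ, fun τ => Fin.revPerm.trans τ, hrevE, hrevE⟩ ?_)
  intro τ
  show QO m _ ↔ QE m (fun a => (((Fin.revPerm.trans τ) a : ℕ)))
  have hcomp : ∀ b : Fin m, gmem (pathGraph m) (fun a => (((Fin.revPerm.trans τ) a : ℕ))) b
      ↔ gmem (pathGraph m) (fun a => ((τ a : ℕ))) (Fin.rev b) := by
    intro b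
    have := gmem_comap (pathGraph m) (pathGraph m) Fin.rev (fun a => ((τ a : ℕ)))
      (fun a b => by
        show ((a:ℕ)+1 = b ∨ (b:ℕ)+1 = a) ↔ ((Fin.rev a : ℕ)+1 = (Fin.rev b : ℕ) ∨ _)
        rw [Fin.val_rev, Fin.val_rev]
        omega)
      (fun a w _ _ hw => absurd (Fin.rev_rev w).symm (hw w.rev)) b
    exact this
  constructor
  · intro h b
    rw [hcomp b]
    rw [h (Fin.rev b), Fin.val_rev]
    omega
  · intro h v
    have := h (Fin.rev v)
    rw [hcomp, Fin.rev_rev] at this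
    rw [this, Fin.val_rev]
    omega

/-- The split path graph: path edges within the two blocks only. -/
def splitG (N k : ℕ) : SimpleGraph (Fin N) where
  Adj v w := (pathGraph N).Adj v w ∧ (((v:ℕ) < k) ↔ ((w:ℕ) < k))
  symm := ⟨fun v w h => ⟨h.1.symm, h.2.symm⟩⟩
  loopless := ⟨fun v h => (pathGraph N).irrefl h.1⟩

theorem count_SB (N k : ℕ) (hkN : k ≤ N) (hk : k % 2 = 0) (hm : (N - k) % 2 = 0) :
    Nat.card {π : Equiv.Perm (Fin N) // GammaSet N π = SB N k} =
      N.choose k * D k * D (N - k) := by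
  obtain ⟨m, rfl⟩ : ∃ m, N = k + m := ⟨N - k, by omega⟩
  have hmk : k + m - k = m := by omega
  rw [hmk] at hm ⊢
  -- pointwise characterization
  have hchar : ∀ π : Equiv.Perm (Fin (k+m)), (GammaSet (k+m) π = SB (k+m) k) ↔
      (QE k (fun a => ((π.symm (Fin.castAdd m a) : ℕ))) ∧
       QO m (fun a => ((π.symm (Fin.natAdd k a) : ℕ)))) := by
    intro π
    set r : Fin (k+m) → ℕ := fun u => ((π.symm u : ℕ)) with hr
    have hcross : ∀ v w : Fin (k+m), (pathGraph (k+m)).Adj w v → ¬ (splitG (k+m) k).Adj w v →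
        w ∉ SB (k+m) k := by
      intro v w hadj hnadj
      have h1 : ¬ (((w:ℕ) < k) ↔ ((v:ℕ) < k)) := fun hh => hnadj ⟨hadj, hh⟩
      have h2 : ((w:ℕ)+1 = v ∨ (v:ℕ)+1 = w) := hadj
      rw [mem_SB]
      omega
    have step1 : (GammaSet (k+m) π = SB (k+m) k) ↔
        (∀ v, gmem (pathGraph (k+m)) r v ↔ v ∈ SB (k+m) k) := by
      rw [Finset.ext_iff]
      constructor
      · intro h v; rw [← h v, mem_GammaSet_iff]
      · intro h v; rw [mem_GammaSet_iff, h v]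
    rw [step1]
    have hsub : ∀ v w, (splitG (k+m) k).Adj v w → (pathGraph (k+m)).Adj v w :=
      fun v w h => h.1
    have step2 : (∀ v, gmem (pathGraph (k+m)) r v ↔ v ∈ SB (k+m) k) ↔
        (∀ v, gmem (splitG (k+m) k) r v ↔ v ∈ SB (k+m) k) := by
      constructor
      · intro H
        have hiff := gmem_split' (pathGraph (k+m)) (splitG (k+m) k) r hsub
          (fun v w hadj hnadj => fun hg => (hcross v w hadj hnadj) ((H w).1 hg))
        intro v
        rw [← hiff v]
        exact H v
      · intro H
        have hiff := gmem_split (pathGraph (k+m)) (splitG (k+m) k) r hsub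
          (fun v w hadj hnadj => fun hg => (hcross v w hadj hnadj) ((H w).1 hg))
        intro v
        rw [hiff v]
        exact H v
    rw [step2]
    have compL : ∀ a : Fin k, gmem (splitG (k+m) k) r (Fin.castAdd m a) ↔
        gmem (pathGraph k) (fun a => r (Fin.castAdd m a)) a := by
      intro a
      refine (gmem_comap (splitG (k+m) k) (pathGraph k) (Fin.castAdd m) r
        (fun a b => ?_) (fun a w hadj _ hw => ?_) a).symm
      · show ((a:ℕ)+1 = b ∨ (b:ℕ)+1 = a) ↔ _
        constructor
        · intro h
          exact ⟨by show ((Fin.castAdd m a:ℕ)+1 = _ ∨ _); simpa using h,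
            by simp [a.isLt, b.isLt]⟩
        · rintro ⟨h, -⟩
          have h' : ((Fin.castAdd m a:ℕ)+1 = (Fin.castAdd m b:ℕ) ∨
            (Fin.castAdd m b:ℕ)+1 = (Fin.castAdd m a:ℕ)) := h
          simpa using h'
      · exfalso
        have hlt : (w : ℕ) < k := by
          have := hadj.2
          simpa [a.isLt] using this.2 (by simpa using a.isLt)
        exact hw ⟨w, hlt⟩ (Fin.ext (by simp))
    have compR : ∀ a : Fin m, gmem (splitG (k+m) k) r (Fin.natAdd k a) ↔
        gmem (pathGraph m) (fun a => r (Fin.natAdd k a)) a := by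
      intro a
      refine (gmem_comap (splitG (k+m) k) (pathGraph m) (Fin.natAdd k) r
        (fun a b => ?_) (fun a w hadj _ hw => ?_) a).symm
      · show ((a:ℕ)+1 = b ∨ (b:ℕ)+1 = a) ↔ _
        constructor
        · intro h
          refine ⟨?_, by simp⟩
          show ((Fin.natAdd k a:ℕ)+1 = _ ∨ (Fin.natAdd k b:ℕ)+1 = _)
          simp only [Fin.coe_natAdd]
          omega
        · rintro ⟨h, -⟩
          have : ((Fin.natAdd k a:ℕ)+1 = (Fin.natAdd k b:ℕ) ∨ (Fin.natAdd k b:ℕ)+1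
            = (Fin.natAdd k a:ℕ)) := h
          simp only [Fin.coe_natAdd] at this
          omega
      · exfalso
        have hge : ¬ ((w : ℕ) < k) := by
          intro hlt
          have := hadj.2.1 hlt
          simp only [Fin.coe_natAdd] at this
          omega
        exact hw ⟨(w:ℕ) - k, by omega⟩ (Fin.ext (by simp only [Fin.coe_natAdd]; omega))
    constructor
    · intro H
      constructor
      · intro a
        rw [← compL a, H (Fin.castAdd m a), mem_SB]
        simp only [Fin.coe_castAdd]
        have := a.isLt
        omega
      · intro a
        rw [← compR a, H (Fin.natAdd k a), mem_SB]
        simp only [Fin.coe_natAdd]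
        omega
    · rintro ⟨H1, H2⟩ v
      by_cases hv : (v : ℕ) < k
      · have hveq : v = Fin.castAdd m ⟨(v:ℕ), hv⟩ := Fin.ext rfl
        rw [hveq, compL, H1 ⟨(v:ℕ), hv⟩, mem_SB]
        simp only [Fin.coe_castAdd]
        omega
      · have hveq : v = Fin.natAdd k ⟨(v:ℕ) - k, by omega⟩ := by
          apply Fin.ext
          simp only [Fin.coe_natAdd]
          omega
        rw [hveq, compR, H2 ⟨(v:ℕ) - k, by omega⟩, mem_SB]
        simp only [Fin.coe_natAdd]
        omega
  have hbij : Nat.card {π : Equiv.Perm (Fin (k+m)) // GammaSet (k+m) π = SB (k+m) k} =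
      Nat.card {ρ : Equiv.Perm (Fin (k+m)) //
        QE k (fun a => ((ρ (Fin.castAdd m a) : ℕ))) ∧
        QO m (fun a => ((ρ (Fin.natAdd k a) : ℕ)))} := by
    refine Nat.card_congr (symmE.subtypeEquiv ?_)
    intro π
    exact hchar π
  rw [hbij, count_split k m (QE k) (QO m) (QE_inv k) (QO_inv m),
    ← D_eq_QE k, QO_card_eq m hm, ← D_eq_QE m]

theorem gmem_not_both {V : Type*} (G : SimpleGraph V) (r : V → ℕ)
    (hr : ∀ v w, r v = r w → v = w) (v w : V) (hadj : G.Adj v w)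
    (hv : gmem G r v) (hw : gmem G r w) : False := by
  rcases lt_trichotomy (r v) (r w) with h | h | h
  · exact (gmem_def G r w).1 hw v hadj h hv
  · exact G.irrefl (v := w) (hr v w h ▸ hadj)
  · exact (gmem_def G r v).1 hv w hadj.symm h hw


theorem worst_case_even_convolution (n : ℕ) (hn : 1 ≤ n) :
    f (2 * n) = ∑ i ∈ Finset.range (n + 1),
      Nat.choose (2 * n) (2 * i) * D (2 * i) * D (2 * n - 2 * i) := by
  classical
  have hhalf : (2 * n + 1) / 2 = n := by omega
  rw [f]
  simp only [hhalf]
  have hcard : Nat.card {π : Equiv.Perm (Fin (2*n)) // gamma (2*n) π = n}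
      = (Finset.univ.filter (fun π : Equiv.Perm (Fin (2*n)) => gamma (2*n) π = n)).card := by
    rw [Nat.card_eq_fintype_card, Fintype.card_subtype]
  rw [hcard]
  have hpart : (Finset.univ.filter (fun π : Equiv.Perm (Fin (2*n)) => gamma (2*n) π = n))
      = (Finset.range (n+1)).biUnion (fun i => Finset.univ.filter
          (fun π : Equiv.Perm (Fin (2*n)) => GammaSet (2*n) π = SB (2*n) (2*i))) := by
    ext π
    simp only [Finset.mem_filter, Finset.mem_univ, true_and, Finset.mem_biUnion,
      Finset.mem_range]
    constructor
    · intro h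
      have hind : ∀ v ∈ GammaSet (2*n) π, ∀ w ∈ GammaSet (2*n) π,
          ¬ (pathGraph (2*n)).Adj v w := by
        intro v hv w hw hadj
        rw [mem_GammaSet_iff] at hv hw
        exact gmem_not_both (pathGraph (2*n)) _
          (fun v w hvw => π.symm.injective (Fin.ext hvw)) v w hadj hv hw
      obtain ⟨i, hi, hT⟩ := indep_structure n (GammaSet (2*n) π) hind h
      exact ⟨i, by omega, hT⟩
    · rintro ⟨i, hi, hT⟩
      show (GammaSet (2*n) π).card = n
      rw [hT]
      exact card_SB n i (by omega)
  rw [hpart, Finset.card_biUnion (fun i hi j hj hij => ?_)]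
  · refine Finset.sum_congr rfl (fun i hi => ?_)
    rw [Finset.mem_range] at hi
    have h1 : (Finset.univ.filter
        (fun π : Equiv.Perm (Fin (2*n)) => GammaSet (2*n) π = SB (2*n) (2*i))).card
        = Nat.card {π : Equiv.Perm (Fin (2*n)) // GammaSet (2*n) π = SB (2*n) (2*i)} := by
      rw [Nat.card_eq_fintype_card, Fintype.card_subtype]
    rw [h1, count_SB (2*n) (2*i) (by omega) (by omega) (by omega)]
  · rw [Finset.mem_coe, Finset.mem_range] at hi hj
    simp only [Function.onFun]
    rw [Finset.disjoint_left]
    rintro π hπ1 hπ2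
    simp only [Finset.mem_filter, Finset.mem_univ, true_and] at hπ1 hπ2
    exact hij (SB_injective n i (by omega) j (by omega) (hπ1.symm.trans hπ2))
end

section
/- For every integer n ≥ 3 with n ≡ 0 (mod 3), the number of best-case permutations is |B_n| = n!/3^{n/3}. -/
/- `B n`: the number of best-case permutations, i.e. permutations `π` for which `γ(π)`
   attains the minimum possible value `⌈n/3⌉`. -/
noncomputable def B (n : ℕ) : ℕ :=
  Nat.card {π : Equiv.Perm (Fin n) // gamma n π = (n + 2) / 3}


open Classical in
noncomputable def dstep {V : Type*} [DecidableEq V] (G : SimpleGraph V) (D : Finset V) (v : V) : Finset V :=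
  if ∃ w ∈ D, G.Adj w v then D else insert v D

lemma domList_eq {V : Type*} [DecidableEq V] (G : SimpleGraph V) (l : List V) :
    domList G l = l.foldl (dstep G) ∅ := rfl

section generic
variable {V : Type*} [DecidableEq V] (G : SimpleGraph V)

lemma subset_dstep (D : Finset V) (v : V) : D ⊆ dstep G D v := by
  unfold dstep; split <;> simp [Finset.subset_insert]

lemma subset_foldl (D : Finset V) (l : List V) : D ⊆ l.foldl (dstep G) D := by
  induction l generalizing D with
  | nil => simp
  | cons a t ih => exact fun x hx => ih _ (subset_dstep G D a hx)

lemma mem_foldl (D : Finset V) (l : List V) (v : V) (h : v ∈ l.foldl (dstep G) D) :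
    v ∈ D ∨ v ∈ l := by
  induction l generalizing D with
  | nil => simp_all
  | cons a t ih =>
    rcases ih _ h with h' | h'
    · unfold dstep at h'
      split at h'
      · exact Or.inl h'
      · rcases Finset.mem_insert.1 h' with rfl | h'
        · simp
        · exact Or.inl h'
    · simp [h']

lemma indep_foldl (D : Finset V) (l : List V)
    (hD : ∀ a ∈ D, ∀ b ∈ D, ¬ G.Adj a b) :
    ∀ a ∈ l.foldl (dstep G) D, ∀ b ∈ l.foldl (dstep G) D, ¬ G.Adj a b := by
  induction l generalizing D with
  | nil => simpa using hD
  | cons c t ih =>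
    refine ih _ ?_
    unfold dstep
    split
    · exact hD
    · rename_i hno
      push_neg at hno
      intro a ha b hb hadj
      rcases Finset.mem_insert.1 ha with rfl | ha'
      · rcases Finset.mem_insert.1 hb with rfl | hb'
        · exact G.loopless.irrefl _ hadj
        · exact hno b hb' hadj.symm
      · rcases Finset.mem_insert.1 hb with rfl | hb'
        · exact hno a ha' hadj
        · exact hD a ha' b hb' hadj

lemma dom_foldl (D : Finset V) (l : List V) (v : V) (hv : v ∈ l) :
    v ∈ l.foldl (dstep G) D ∨ ∃ w ∈ l.foldl (dstep G) D, G.Adj w v := by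
  induction l generalizing D with
  | nil => simp_all
  | cons a t ih =>
    rcases List.mem_cons.1 hv with rfl | hv
    · by_cases h : ∃ w ∈ D, G.Adj w v
      · obtain ⟨w, hw, hadj⟩ := h
        exact Or.inr ⟨w, subset_foldl G _ t (subset_dstep G D v hw), hadj⟩
      · left
        refine subset_foldl G _ t ?_
        unfold dstep
        rw [if_neg h]
        exact Finset.mem_insert_self v D
    · exact ih _ hv

end generic

lemma pathAdj {n : ℕ} {i j : Fin n} : (pathGraph n).Adj i j ↔ ((i : ℕ) + 1 = j ∨ (j : ℕ) + 1 = i) :=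
  Iff.rfl

open Classical in
noncomputable def Ncl (n : ℕ) (d : Fin n) : Finset (Fin n) :=
  Finset.univ.filter (fun v => v = d ∨ (pathGraph n).Adj d v)

lemma mem_Ncl {n : ℕ} {d v : Fin n} :
    v ∈ Ncl n d ↔ ((v : ℕ) = d ∨ (d : ℕ) + 1 = v ∨ (v : ℕ) + 1 = d) := by
  simp only [Ncl, Finset.mem_filter, Finset.mem_univ, true_and, pathAdj]
  constructor
  · rintro (rfl | h | h)
    · exact Or.inl rfl
    · exact Or.inr (Or.inl h)
    · exact Or.inr (Or.inr h)
  · rintro (h | h | h)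
    · exact Or.inl (Fin.ext h)
    · exact Or.inr (Or.inl h)
    · exact Or.inr (Or.inr h)

lemma card_Ncl_le {n : ℕ} (d : Fin n) : (Ncl n d).card ≤ 3 := by
  have : (Ncl n d).card ≤ ({0, 1, 2} : Finset ℕ).card := by
    refine Finset.card_le_card_of_injOn (fun v => (v : ℕ) + 1 - (d : ℕ)) ?_ ?_
    · intro v hv
      rw [Finset.mem_coe, mem_Ncl] at hv
      simp only [Finset.mem_coe, Finset.mem_insert, Finset.mem_singleton]
      omega
    · intro v hv w hw h
      rw [Finset.mem_coe, mem_Ncl] at hv hw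
      dsimp only at h
      exact Fin.ext (by omega)
  simpa using this

lemma card_Ncl_boundary {n : ℕ} (d : Fin n) (h : (d : ℕ) = 0 ∨ (d : ℕ) = n - 1) :
    (Ncl n d).card ≤ 2 := by
  have hn := d.isLt
  rcases h with h | h
  · have : (Ncl n d).card ≤ ({0, 1} : Finset ℕ).card := by
      refine Finset.card_le_card_of_injOn (fun v => (v : ℕ)) ?_ ?_
      · intro v hv
        rw [Finset.mem_coe, mem_Ncl] at hv
        simp only [Finset.mem_coe, Finset.mem_insert, Finset.mem_singleton]
        omega
      · intro v hv w hw hvw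
        exact Fin.ext hvw
    simpa using this
  · have : (Ncl n d).card ≤ ({0, 1} : Finset ℕ).card := by
      refine Finset.card_le_card_of_injOn (fun v => (v : ℕ) + 1 - (d : ℕ)) ?_ ?_
      · intro v hv
        rw [Finset.mem_coe, mem_Ncl] at hv
        have := v.isLt
        simp only [Finset.mem_coe, Finset.mem_insert, Finset.mem_singleton]
        omega
      · intro v hv w hw hvw
        rw [Finset.mem_coe, mem_Ncl] at hv hw
        dsimp only at hvw
        have h1 := v.isLt
        have h2 := w.isLt
        exact Fin.ext (by omega)
    simpa using this

lemma Ncl_overlap {n : ℕ} (d d' : Fin n) (h : (d : ℕ) < d') (h2 : (d' : ℕ) ≤ (d : ℕ) + 2) :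
    (Ncl n d ∩ Ncl n d').Nonempty := by
  rcases Nat.lt_or_ge ((d : ℕ) + 1) d' with h1 | h1
  · -- d' = d + 2, witness d+1
    have hlt : (d : ℕ) + 1 < n := lt_trans (by omega) d'.isLt
    refine ⟨⟨(d : ℕ) + 1, hlt⟩, Finset.mem_inter.2 ⟨?_, ?_⟩⟩ <;> rw [mem_Ncl] <;> simp <;> omega
  · -- d' = d + 1, witness d
    refine ⟨d, Finset.mem_inter.2 ⟨?_, ?_⟩⟩ <;> rw [mem_Ncl] <;> omega

noncomputable def Mset (n : ℕ) : Finset (Fin n) :=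
  Finset.univ.filter (fun v => (v : ℕ) % 3 = 1)

lemma card_Mset {n m : ℕ} (hm : n = 3 * m) : (Mset n).card = m := by
  classical
  have himg : Mset n = (Finset.univ : Finset (Fin m)).image
      (fun k : Fin m => (⟨3 * (k : ℕ) + 1, by have := k.isLt; omega⟩ : Fin n)) := by
    ext v
    simp only [Mset, Finset.mem_filter, Finset.mem_univ, true_and, Finset.mem_image]
    constructor
    · intro h
      refine ⟨⟨(v : ℕ) / 3, by have := v.isLt; omega⟩, Fin.ext ?_⟩
      simp only [Fin.val_mk]
      omega
    · rintro ⟨k, -, rfl⟩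
      simp only [Fin.val_mk]
      omega
  rw [himg, Finset.card_image_of_injective]
  · simp
  · intro a b hab
    have := congrArg Fin.val hab
    simp only [Fin.val_mk] at this
    exact Fin.ext (by omega)


section partB
variable {n m : ℕ} (hm : n = 3 * m) (D : Finset (Fin n))
  (hdom : ∀ v : Fin n, v ∈ D ∨ ∃ w ∈ D, (pathGraph n).Adj w v)
  (hcard : D.card = m)

include hm hdom hcard

lemma univ_subset_biUnion : (Finset.univ : Finset (Fin n)) ⊆ D.biUnion (Ncl n) := by
  intro v _
  rw [Finset.mem_biUnion]
  rcases hdom v with h | ⟨w, hw, hadj⟩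
  · exact ⟨v, h, mem_Ncl.2 (Or.inl rfl)⟩
  · refine ⟨w, hw, mem_Ncl.2 ?_⟩
    rw [pathAdj] at hadj
    omega

lemma boundary_not_mem : ∀ d ∈ D, (d : ℕ) ≠ 0 ∧ (d : ℕ) ≠ n - 1 := by
  intro d hd
  by_contra hcon
  have hb : (d : ℕ) = 0 ∨ (d : ℕ) = n - 1 := by tauto
  have h1 : (D.biUnion (Ncl n)).card ≤ (Ncl n d).card + ((D.erase d).biUnion (Ncl n)).card := by
    have hsub : D.biUnion (Ncl n) ⊆ Ncl n d ∪ (D.erase d).biUnion (Ncl n) := by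
      intro v hv
      rw [Finset.mem_biUnion] at hv
      obtain ⟨e, he, hve⟩ := hv
      rcases eq_or_ne e d with rfl | hne
      · exact Finset.mem_union_left _ hve
      · exact Finset.mem_union_right _ (Finset.mem_biUnion.2 ⟨e, Finset.mem_erase.2 ⟨hne, he⟩, hve⟩)
    calc (D.biUnion (Ncl n)).card ≤ (Ncl n d ∪ (D.erase d).biUnion (Ncl n)).card :=
          Finset.card_le_card hsub
      _ ≤ _ := Finset.card_union_le _ _
  have h2 : ((D.erase d).biUnion (Ncl n)).card ≤ 3 * (m - 1) := by
    calc ((D.erase d).biUnion (Ncl n)).card ≤ ∑ e ∈ D.erase d, (Ncl n e).card :=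
          Finset.card_biUnion_le
      _ ≤ ∑ _e ∈ D.erase d, 3 := Finset.sum_le_sum (fun e _ => card_Ncl_le e)
      _ = 3 * (m - 1) := by
          rw [Finset.sum_const, Finset.card_erase_of_mem hd, hcard]; ring
  have h3 : n ≤ (D.biUnion (Ncl n)).card :=
    le_trans (by simp) (Finset.card_le_card (univ_subset_biUnion hm D hdom hcard))
  have h4 := card_Ncl_boundary d hb
  have hm1 : 1 ≤ m := by
    have : 0 < D.card := Finset.card_pos.2 ⟨d, hd⟩
    omega
  omega

lemma separation : ∀ d ∈ D, ∀ d' ∈ D, (d : ℕ) < d' → (d : ℕ) + 3 ≤ d' := by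
  intro d hd d' hd' hlt
  by_contra hcon
  have hover := Ncl_overlap d d' hlt (by omega)
  have hne : d ≠ d' := by intro h; rw [h] at hlt; omega
  have hcard2 : (Ncl n d ∪ Ncl n d').card ≤ 5 := by
    have := Finset.card_union_add_card_inter (Ncl n d) (Ncl n d')
    have h1 := card_Ncl_le d
    have h2 := card_Ncl_le d'
    have h3 : 1 ≤ (Ncl n d ∩ Ncl n d').card := Finset.card_pos.2 hover
    omega
  set E := (D.erase d).erase d' with hE
  have hsub : D.biUnion (Ncl n) ⊆ (Ncl n d ∪ Ncl n d') ∪ E.biUnion (Ncl n) := by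
    intro v hv
    rw [Finset.mem_biUnion] at hv
    obtain ⟨e, he, hve⟩ := hv
    rcases eq_or_ne e d with rfl | h1
    · exact Finset.mem_union_left _ (Finset.mem_union_left _ hve)
    rcases eq_or_ne e d' with rfl | h2
    · exact Finset.mem_union_left _ (Finset.mem_union_right _ hve)
    · exact Finset.mem_union_right _
        (Finset.mem_biUnion.2 ⟨e, Finset.mem_erase.2 ⟨h2, Finset.mem_erase.2 ⟨h1, he⟩⟩, hve⟩)
  have hEcard : E.card = m - 2 := by
    rw [hE, Finset.card_erase_of_mem (Finset.mem_erase.2 ⟨hne.symm, hd'⟩),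
      Finset.card_erase_of_mem hd, hcard]
    omega
  have h2 : (E.biUnion (Ncl n)).card ≤ 3 * (m - 2) := by
    calc (E.biUnion (Ncl n)).card ≤ ∑ e ∈ E, (Ncl n e).card := Finset.card_biUnion_le
      _ ≤ ∑ _e ∈ E, 3 := Finset.sum_le_sum (fun e _ => card_Ncl_le e)
      _ = 3 * (m - 2) := by rw [Finset.sum_const, hEcard]; ring
  have h3 : n ≤ (D.biUnion (Ncl n)).card :=
    le_trans (by simp) (Finset.card_le_card (univ_subset_biUnion hm D hdom hcard))
  have h4 : (D.biUnion (Ncl n)).card ≤ (Ncl n d ∪ Ncl n d').card + (E.biUnion (Ncl n)).card :=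
    le_trans (Finset.card_le_card hsub) (Finset.card_union_le _ _)
  have hm2 : 2 ≤ m := by
    have : ({d, d'} : Finset (Fin n)) ⊆ D := by
      intro x hx; rcases Finset.mem_insert.1 hx with rfl | hx
      · exact hd
      · rw [Finset.mem_singleton] at hx; rw [hx]; exact hd'
    have := Finset.card_le_card this
    rw [Finset.card_pair hne] at this
    omega
  omega

lemma mid_mem_D : ∀ k, k < m → ∀ (h : 3 * k + 1 < n), (⟨3 * k + 1, h⟩ : Fin n) ∈ D := by
  intro k
  induction k using Nat.strong_induction_on with
  | _ k ih =>
    intro hk h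
    have h3k : 3 * k < n := by omega
    rcases hdom ⟨3 * k, h3k⟩ with hin | ⟨w, hw, hadj⟩
    · -- 3k ∈ D: derive contradiction
      exfalso
      rcases Nat.eq_zero_or_pos k with rfl | hkpos
      · exact (boundary_not_mem hm D hdom hcard _ hin).1 (by simp)
      · have hprev : 3 * (k - 1) + 1 < n := by omega
        have hpm := ih (k - 1) (by omega) (by omega) hprev
        have hsep1 := separation hm D hdom hcard _ hpm _ hin
        have hsep2 := separation hm D hdom hcard _ hin _ hpm
        simp only [Fin.val_mk] at hsep1 hsep2 ⊢
        omega
    · rw [pathAdj] at hadj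
      simp only [Fin.val_mk] at hadj
      -- w = 3k - 1 or w = 3k + 1
      have hwval : (w : ℕ) = 3 * k + 1 := by
        rcases Nat.eq_zero_or_pos k with rfl | hkpos
        · have := (boundary_not_mem hm D hdom hcard _ hw).1
          omega
        · have hprev : 3 * (k - 1) + 1 < n := by omega
          have hpm := ih (k - 1) (by omega) (by omega) hprev
          rcases eq_or_ne w ⟨3 * (k - 1) + 1, hprev⟩ with rfl | hne
          · simp only [Fin.val_mk] at hadj; omega
          · have hwne : (w : ℕ) ≠ 3 * (k - 1) + 1 := by
              intro hh; exact hne (Fin.ext hh)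
            rcases Nat.lt_or_ge (w : ℕ) (3 * (k - 1) + 1) with hlt | hge
            · have := separation hm D hdom hcard _ hw _ hpm hlt
              simp only [Fin.val_mk] at this; omega
            · have hlt : (3 * (k - 1) + 1 : ℕ) < w := by omega
              have := separation hm D hdom hcard _ hpm _ hw (by simpa using hlt)
              simp only [Fin.val_mk] at this; omega
      have : w = ⟨3 * k + 1, h⟩ := Fin.ext hwval
      rwa [this] at hw

lemma D_eq_Mset : D = Mset n := by
  have hsub : Mset n ⊆ D := by
    intro v hv
    simp only [Mset, Finset.mem_filter] at hv
    have hk : (v : ℕ) / 3 < m := by have := v.isLt; omega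
    have h1 : 3 * ((v : ℕ) / 3) + 1 < n := by have := v.isLt; omega
    have := mid_mem_D hm D hdom hcard ((v : ℕ) / 3) hk h1
    have hv' : v = ⟨3 * ((v : ℕ) / 3) + 1, h1⟩ := Fin.ext (by simp only [Fin.val_mk]; omega)
    rwa [← hv'] at this
  symm
  apply Finset.eq_of_subset_of_card_le hsub
  rw [hcard, card_Mset hm]

end partB

def midv {n : ℕ} (h3 : n % 3 = 0) (v : Fin n) : Fin n :=
  ⟨3 * ((v : ℕ) / 3) + 1, by have := v.isLt; omega⟩

lemma midv_val {n : ℕ} (h3 : n % 3 = 0) (v : Fin n) :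
    (midv h3 v : ℕ) = 3 * ((v : ℕ) / 3) + 1 := rfl

lemma midv_adj {n : ℕ} (h3 : n % 3 = 0) {v : Fin n} (hv : (v : ℕ) % 3 ≠ 1) :
    (pathGraph n).Adj (midv h3 v) v := by
  rw [pathAdj, midv_val]
  omega

def Cnd {n : ℕ} (h3 : n % 3 = 0) (π : Equiv.Perm (Fin n)) : Prop :=
  ∀ v : Fin n, (v : ℕ) % 3 ≠ 1 → (π.symm (midv h3 v) : ℕ) < (π.symm v : ℕ)

noncomputable def Dfold {n : ℕ} (π : Equiv.Perm (Fin n)) (i : ℕ) : Finset (Fin n) :=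
  ((List.ofFn fun j => π j).take i).foldl (dstep (pathGraph n)) ∅

lemma Dfold_succ {n : ℕ} (π : Equiv.Perm (Fin n)) (i : ℕ) (hi : i < n) :
    Dfold π (i + 1) = dstep (pathGraph n) (Dfold π i) (π ⟨i, hi⟩) := by
  unfold Dfold
  rw [List.take_succ]
  have : (List.ofFn fun j => π j)[i]? = some (π ⟨i, hi⟩) := by
    rw [List.getElem?_eq_getElem (by simpa using hi)]
    simp
  rw [this]
  simp [List.foldl_append]

lemma GammaSet_eq_Dfold {n : ℕ} (π : Equiv.Perm (Fin n)) : GammaSet n π = Dfold π n := by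
  unfold GammaSet Dfold
  rw [domList_eq]
  congr 1
  rw [List.take_of_length_le (by simp)]

lemma mem_Dfold_pos {n : ℕ} (π : Equiv.Perm (Fin n)) (i : ℕ) (hi : i ≤ n) (v : Fin n)
    (hv : v ∈ Dfold π i) : (π.symm v : ℕ) < i := by
  induction i with
  | zero => simp [Dfold] at hv
  | succ i ih =>
    rw [Dfold_succ π i (by omega)] at hv
    unfold dstep at hv
    split at hv
    · have := ih (by omega) hv; omega
    · rcases Finset.mem_insert.1 hv with rfl | hv'
      · rw [Equiv.symm_apply_apply]; simp
      · have := ih (by omega) hv'; omega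

lemma Dfold_mono {n : ℕ} (π : Equiv.Perm (Fin n)) {i j : ℕ} (h : i ≤ j) :
    Dfold π i ⊆ Dfold π j := by
  induction j with
  | zero => simp_all
  | succ j ih =>
    rcases Nat.eq_or_lt_of_le h with rfl | hlt
    · exact subset_rfl
    rcases Nat.lt_or_ge j n with hj | hj
    · rw [Dfold_succ π j hj]
      exact subset_trans (ih (by omega)) (subset_dstep _ _ _)
    · have : Dfold π (j + 1) = Dfold π j := by
        unfold Dfold
        rw [List.take_of_length_le (by simp; omega), List.take_of_length_le (by simp; omega)]
      rw [this]
      exact ih (by omega)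

lemma Dfold_eq_of_Cnd {n : ℕ} (h3 : n % 3 = 0) (π : Equiv.Perm (Fin n)) (hC : Cnd h3 π) :
    ∀ i, i ≤ n → Dfold π i = (Mset n).filter (fun v => (π.symm v : ℕ) < i) := by
  intro i
  induction i with
  | zero =>
    intro _
    simp [Dfold]
  | succ i ih =>
    intro hi
    have hi' : i < n := by omega
    set w := π ⟨i, hi'⟩ with hw
    have hwsymm : (π.symm w : ℕ) = i := by rw [hw, Equiv.symm_apply_apply]
    rw [Dfold_succ π i hi', ih (by omega)]
    by_cases hmod : (w : ℕ) % 3 = 1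
    · -- w is a middle: it gets inserted
      have hins : dstep (pathGraph n) ((Mset n).filter (fun v => (π.symm v : ℕ) < i)) w
          = insert w ((Mset n).filter (fun v => (π.symm v : ℕ) < i)) := by
        unfold dstep
        rw [if_neg]
        rintro ⟨u, hu, hadj⟩
        rw [Finset.mem_filter] at hu
        have hu1 : (u : ℕ) % 3 = 1 := by
          have := hu.1
          simp only [Mset, Finset.mem_filter] at this
          exact this.2
        rw [pathAdj] at hadj
        omega
      rw [hins]
      ext v
      simp only [Finset.mem_insert, Finset.mem_filter, Mset, Finset.mem_univ, true_and]
      constructor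
      · rintro (rfl | ⟨h1, h2⟩)
        · exact ⟨hmod, by omega⟩
        · exact ⟨h1, by omega⟩
      · rintro ⟨h1, h2⟩
        rcases Nat.lt_or_ge (π.symm v : ℕ) i with h | h
        · exact Or.inr ⟨h1, h⟩
        · left
          have : (π.symm v : ℕ) = i := by omega
          have : π.symm v = ⟨i, hi'⟩ := Fin.ext this
          rw [hw, ← this, Equiv.apply_symm_apply]
    · -- w is a side: its middle is already in D
      have hmem : midv h3 w ∈ (Mset n).filter (fun v => (π.symm v : ℕ) < i) := by
        rw [Finset.mem_filter]
        constructor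
        · simp only [Mset, Finset.mem_filter, Finset.mem_univ, true_and, midv_val]
          omega
        · have := hC w hmod
          omega
      have hstep : dstep (pathGraph n) ((Mset n).filter (fun v => (π.symm v : ℕ) < i)) w
          = (Mset n).filter (fun v => (π.symm v : ℕ) < i) := by
        unfold dstep
        rw [if_pos ⟨midv h3 w, hmem, midv_adj h3 hmod⟩]
      rw [hstep]
      ext v
      simp only [Finset.mem_filter, Mset, Finset.mem_univ, true_and]
      constructor
      · rintro ⟨h1, h2⟩; exact ⟨h1, by omega⟩
      · rintro ⟨h1, h2⟩
        refine ⟨h1, ?_⟩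
        rcases Nat.lt_or_ge (π.symm v : ℕ) i with h | h
        · exact h
        · exfalso
          have hvi : (π.symm v : ℕ) = i := by omega
          have : π.symm v = ⟨i, hi'⟩ := Fin.ext hvi
          have hvw : v = w := by rw [hw, ← this, Equiv.apply_symm_apply]
          rw [hvw] at h1
          exact hmod h1

lemma Gamma_eq_Mset_of_Cnd {n : ℕ} (h3 : n % 3 = 0) (π : Equiv.Perm (Fin n)) (hC : Cnd h3 π) :
    GammaSet n π = Mset n := by
  rw [GammaSet_eq_Dfold, Dfold_eq_of_Cnd h3 π hC n le_rfl]
  ext v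
  simp [Mset, v.isLt]

lemma Cnd_of_Gamma_eq_Mset {n : ℕ} (h3 : n % 3 = 0) (π : Equiv.Perm (Fin n))
    (hG : GammaSet n π = Mset n) : Cnd h3 π := by
  intro v hv
  by_contra hcon
  have hne : π.symm (midv h3 v) ≠ π.symm v := by
    intro h
    have := π.symm.injective h
    have := congrArg Fin.val this
    rw [midv_val] at this
    omega
  have hlt : (π.symm v : ℕ) < (π.symm (midv h3 v) : ℕ) := by
    have : (π.symm (midv h3 v) : ℕ) ≠ (π.symm v : ℕ) := fun h => hne (Fin.ext h)
    omega
  set i : ℕ := (π.symm v : ℕ) with hidef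
  have hi : i < n := (π.symm v).isLt
  have hπi : π ⟨i, hi⟩ = v := by
    have : (⟨i, hi⟩ : Fin n) = π.symm v := Fin.ext rfl
    rw [this, Equiv.apply_symm_apply]
  -- no neighbor of v is in Dfold π i
  have hno : ¬ ∃ w ∈ Dfold π i, (pathGraph n).Adj w v := by
    rintro ⟨w, hw, hadj⟩
    have hwG : w ∈ Mset n := by
      rw [← hG, GammaSet_eq_Dfold]
      exact Dfold_mono π (le_of_lt hi) hw
    have hw1 : (w : ℕ) % 3 = 1 := by
      simpa [Mset] using hwG
    rw [pathAdj] at hadj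
    have hwmid : w = midv h3 v := Fin.ext (by rw [midv_val]; omega)
    rw [hwmid] at hw
    have := mem_Dfold_pos π i (le_of_lt hi) _ hw
    omega
  have hvin : v ∈ Dfold π (i + 1) := by
    rw [Dfold_succ π i hi, hπi]
    unfold dstep
    rw [if_neg hno]
    exact Finset.mem_insert_self v _
  have : v ∈ Mset n := by
    rw [← hG, GammaSet_eq_Dfold]
    exact Dfold_mono π (by omega) hvin
  have : (v : ℕ) % 3 = 1 := by simpa [Mset] using this
  exact hv this

lemma gamma_iff_Cnd {n m : ℕ} (hm : n = 3 * m) (hmpos : 1 ≤ m) (π : Equiv.Perm (Fin n)) :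
    gamma n π = m ↔ Cnd (by omega) π := by
  have h3 : n % 3 = 0 := by omega
  constructor
  · intro hγ
    apply Cnd_of_Gamma_eq_Mset h3
    have hdom : ∀ v : Fin n, v ∈ GammaSet n π ∨ ∃ w ∈ GammaSet n π, (pathGraph n).Adj w v := by
      intro v
      have hv : v ∈ List.ofFn (fun i => π i) := by
        rw [List.mem_ofFn]
        exact ⟨π.symm v, Equiv.apply_symm_apply π v⟩
      rw [GammaSet, domList_eq]
      exact dom_foldl (pathGraph n) ∅ _ v hv
    exact D_eq_Mset hm (GammaSet n π) hdom hγ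
  · intro hC
    rw [gamma, Gamma_eq_Mset_of_Cnd h3 π hC, card_Mset hm]

section counting
variable {n m : ℕ}

def tri (hm : n = 3 * m) (v : Fin n) : Fin m :=
  ⟨(v : ℕ) / 3, by have := v.isLt; omega⟩

def slot (hm : n = 3 * m) (k : Fin m) (j : Fin 3) : Fin n :=
  ⟨3 * (k : ℕ) + (j : ℕ), by have := k.isLt; have := j.isLt; omega⟩

def rotF (hm : n = 3 * m) (c : Fin m → Fin 3) (v : Fin n) : Fin n :=
  ⟨3 * ((v : ℕ) / 3) + (((v : ℕ) % 3 + (c (tri hm v) : ℕ)) % 3), by have := v.isLt; omega⟩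

lemma rotF_val (hm : n = 3 * m) (c : Fin m → Fin 3) (v : Fin n) :
    (rotF hm c v : ℕ) = 3 * ((v : ℕ) / 3) + (((v : ℕ) % 3 + (c (tri hm v) : ℕ)) % 3) := rfl

lemma tri_rotF (hm : n = 3 * m) (c : Fin m → Fin 3) (v : Fin n) :
    tri hm (rotF hm c v) = tri hm v := by
  apply Fin.ext
  show (rotF hm c v : ℕ) / 3 = (v : ℕ) / 3
  rw [rotF_val]
  omega

def cInv (c : Fin m → Fin 3) : Fin m → Fin 3 := fun k => ⟨(3 - (c k : ℕ)) % 3, by omega⟩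

lemma cInv_val (c : Fin m → Fin 3) (k : Fin m) : (cInv c k : ℕ) = (3 - (c k : ℕ)) % 3 := rfl

def rotE (hm : n = 3 * m) (c : Fin m → Fin 3) : Equiv.Perm (Fin n) where
  toFun := rotF hm c
  invFun := rotF hm (cInv c)
  left_inv := by
    intro v
    apply Fin.ext
    rw [rotF_val hm (cInv c) (rotF hm c v), tri_rotF, cInv_val, rotF_val hm c v]
    have := (c (tri hm v)).isLt
    omega
  right_inv := by
    intro v
    apply Fin.ext
    rw [rotF_val hm c (rotF hm (cInv c) v), tri_rotF, rotF_val hm (cInv c) v, cInv_val]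
    have := (c (tri hm v)).isLt
    omega

lemma rotE_symm_apply (hm : n = 3 * m) (c : Fin m → Fin 3) (v : Fin n) :
    (rotE hm c).symm v = rotF hm (cInv c) v := rfl

lemma rotE_apply (hm : n = 3 * m) (c : Fin m → Fin 3) (v : Fin n) :
    rotE hm c v = rotF hm c v := rfl

lemma tri_slot (hm : n = 3 * m) (k : Fin m) (j : Fin 3) : tri hm (slot hm k j) = k := by
  apply Fin.ext
  show (3 * (k : ℕ) + (j : ℕ)) / 3 = k
  have := j.isLt
  omega

lemma rotF_slot (hm : n = 3 * m) (c : Fin m → Fin 3) (k : Fin m) (j : Fin 3) :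
    rotF hm c (slot hm k j) = slot hm k ⟨((j : ℕ) + (c k : ℕ)) % 3, by omega⟩ := by
  apply Fin.ext
  rw [rotF_val, tri_slot]
  show _ = 3 * (k : ℕ) + ((j : ℕ) + (c k : ℕ)) % 3
  have := j.isLt
  have hs : (slot hm k j : ℕ) = 3 * (k : ℕ) + (j : ℕ) := rfl
  rw [hs]
  omega

/-- position of vertex `v` in the reveal order of `τ`. -/
def pos (τ : Equiv.Perm (Fin n)) (v : Fin n) : ℕ := (τ.symm v : ℕ)

lemma pos_ne (τ : Equiv.Perm (Fin n)) {v w : Fin n} (h : v ≠ w) : pos τ v ≠ pos τ w := by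
  intro hh
  exact h (τ.symm.injective (Fin.ext hh))

lemma slot_ne (hm : n = 3 * m) (k : Fin m) {j j' : Fin 3} (h : j ≠ j') :
    slot hm k j ≠ slot hm k j' := by
  intro hh
  apply h
  apply Fin.ext
  have := congrArg Fin.val hh
  simp only [slot] at this
  omega

noncomputable def slotm (hm : n = 3 * m) (τ : Equiv.Perm (Fin n)) (k : Fin m) : Fin 3 :=
  if pos τ (slot hm k 0) < pos τ (slot hm k 1) ∧ pos τ (slot hm k 0) < pos τ (slot hm k 2) then 0
  else if pos τ (slot hm k 1) < pos τ (slot hm k 2) then 1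
  else 2

lemma fin3_cases : ∀ j : Fin 3, j = 0 ∨ j = 1 ∨ j = 2 := by decide

lemma slotm_min (hm : n = 3 * m) (τ : Equiv.Perm (Fin n)) (k : Fin m) :
    ∀ j : Fin 3, j ≠ slotm hm τ k → pos τ (slot hm k (slotm hm τ k)) < pos τ (slot hm k j) := by
  have d01 := pos_ne τ (slot_ne hm k (show (0 : Fin 3) ≠ 1 by decide))
  have d02 := pos_ne τ (slot_ne hm k (show (0 : Fin 3) ≠ 2 by decide))
  have d12 := pos_ne τ (slot_ne hm k (show (1 : Fin 3) ≠ 2 by decide))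
  intro j hj
  have hcases := fin3_cases j
  unfold slotm at hj ⊢
  rcases hcases with rfl | rfl | rfl <;> split_ifs at hj ⊢ with h1 h2 <;>
    first
      | exact absurd rfl hj
      | omega

lemma slotm_eq (hm : n = 3 * m) (τ : Equiv.Perm (Fin n)) (k : Fin m) (j' : Fin 3)
    (h : ∀ j : Fin 3, j ≠ j' → pos τ (slot hm k j') < pos τ (slot hm k j)) :
    slotm hm τ k = j' := by
  by_contra hne
  have h1 := slotm_min hm τ k j' (fun hh => hne hh.symm)
  have h2 := h (slotm hm τ k) hne
  omega

lemma pos_trans (hm : n = 3 * m) (σ : Equiv.Perm (Fin n)) (c : Fin m → Fin 3) (v : Fin n) :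
    pos (σ.trans (rotE hm c)) v = pos σ (rotF hm (cInv c) v) := rfl

lemma slotm_trans (hm : n = 3 * m) (σ : Equiv.Perm (Fin n)) (c : Fin m → Fin 3) (k : Fin m)
    (hσ : slotm hm σ k = 1) :
    slotm hm (σ.trans (rotE hm c)) k = ⟨(1 + (c k : ℕ)) % 3, by omega⟩ := by
  apply slotm_eq
  intro j hj
  rw [pos_trans, pos_trans, rotF_slot hm (cInv c) k, rotF_slot hm (cInv c) k]
  have hck := (c k).isLt
  have e1 : (⟨((((⟨(1 + (c k : ℕ)) % 3, by omega⟩ : Fin 3) : ℕ)) + (cInv c k : ℕ)) % 3, by omega⟩ : Fin 3) = 1 := by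
    apply Fin.ext
    show ((1 + (c k : ℕ)) % 3 + (3 - (c k : ℕ)) % 3) % 3 = 1
    omega
  rw [e1]
  have hne1 : (⟨((j : ℕ) + (cInv c k : ℕ)) % 3, by omega⟩ : Fin 3) ≠ 1 := by
    intro hh
    apply hj
    have := congrArg Fin.val hh
    simp only [cInv_val] at this
    apply Fin.ext
    show (j : ℕ) = (1 + (c k : ℕ)) % 3
    have hjlt := j.isLt
    have h1v : ((1 : Fin 3) : ℕ) = 1 := rfl
    rw [h1v] at this
    omega
  have hne2 : (⟨((j : ℕ) + (cInv c k : ℕ)) % 3, by omega⟩ : Fin 3) ≠ slotm hm σ k :=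
    fun hh => hne1 (hh.trans hσ)
  have h2 := slotm_min hm σ k ⟨((j : ℕ) + (cInv c k : ℕ)) % 3, by omega⟩ hne2
  have e3 : pos σ (slot hm k (slotm hm σ k)) = pos σ (slot hm k 1) :=
    congrArg (pos σ) (congrArg (slot hm k) hσ)
  omega

end counting

section counting2
variable {n m : ℕ}

noncomputable def cOf (hm : n = 3 * m) (τ : Equiv.Perm (Fin n)) : Fin m → Fin 3 :=
  fun k => ⟨((slotm hm τ k : ℕ) + 2) % 3, by omega⟩

lemma cOf_val (hm : n = 3 * m) (τ : Equiv.Perm (Fin n)) (k : Fin m) :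
    (cOf hm τ k : ℕ) = ((slotm hm τ k : ℕ) + 2) % 3 := rfl

lemma pos_untrans (hm : n = 3 * m) (τ : Equiv.Perm (Fin n)) (c : Fin m → Fin 3) (v : Fin n) :
    pos (τ.trans (rotE hm c).symm) v = pos τ (rotF hm c v) := rfl

lemma slotm_untrans (hm : n = 3 * m) (τ : Equiv.Perm (Fin n)) (k : Fin m) :
    slotm hm (τ.trans (rotE hm (cOf hm τ)).symm) k = 1 := by
  apply slotm_eq
  intro j hj
  rw [pos_untrans, pos_untrans, rotF_slot hm (cOf hm τ) k, rotF_slot hm (cOf hm τ) k]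
  have hs := (slotm hm τ k).isLt
  have e1 : (⟨(((1 : Fin 3) : ℕ) + (cOf hm τ k : ℕ)) % 3, by omega⟩ : Fin 3) = slotm hm τ k := by
    apply Fin.ext
    rw [Fin.val_mk, cOf_val]
    show (1 + ((slotm hm τ k : ℕ) + 2) % 3) % 3 = (slotm hm τ k : ℕ)
    omega
  rw [e1]
  have hjv : (j : ℕ) ≠ 1 := by
    intro hh
    exact hj (Fin.ext hh)
  have hne2 : (⟨((j : ℕ) + (cOf hm τ k : ℕ)) % 3, by omega⟩ : Fin 3) ≠ slotm hm τ k := by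
    intro hh
    have := congrArg Fin.val hh
    simp only [Fin.val_mk, cOf_val] at this
    have hjlt := j.isLt
    omega
  exact slotm_min hm τ k ⟨((j : ℕ) + (cOf hm τ k : ℕ)) % 3, by omega⟩ hne2

noncomputable def decompE (hm : n = 3 * m) :
    {σ : Equiv.Perm (Fin n) // ∀ k, slotm hm σ k = 1} × (Fin m → Fin 3) ≃ Equiv.Perm (Fin n) where
  toFun p := p.1.1.trans (rotE hm p.2)
  invFun τ := (⟨τ.trans (rotE hm (cOf hm τ)).symm, fun k => slotm_untrans hm τ k⟩, cOf hm τ)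
  left_inv := by
    rintro ⟨⟨σ, hσ⟩, c⟩
    have hc : cOf hm (σ.trans (rotE hm c)) = c := by
      funext k
      apply Fin.ext
      rw [cOf_val, slotm_trans hm σ c k (hσ k)]
      show ((1 + (c k : ℕ)) % 3 + 2) % 3 = (c k : ℕ)
      have := (c k).isLt
      omega
    have hσc : (σ.trans (rotE hm c)).trans (rotE hm (cOf hm (σ.trans (rotE hm c)))).symm = σ := by
      rw [hc]
      ext x
      simp
    simp only [Prod.mk.injEq, Subtype.mk.injEq]
    exact ⟨hσc, hc⟩
  right_inv := by
    intro τ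
    ext x
    simp

lemma count_slotm (hm : n = 3 * m) :
    Nat.card {σ : Equiv.Perm (Fin n) // ∀ k, slotm hm σ k = 1} * 3 ^ m = n.factorial := by
  classical
  have h1 := Nat.card_congr (decompE hm)
  rw [Nat.card_prod] at h1
  have h2 : Nat.card (Fin m → Fin 3) = 3 ^ m := by
    rw [Nat.card_eq_fintype_card, Fintype.card_fun]
    simp
  have h3 : Nat.card (Equiv.Perm (Fin n)) = n.factorial := by
    rw [Nat.card_eq_fintype_card]
    simp [Fintype.card_perm]
  rw [h2, h3] at h1
  exact h1

lemma slot_val (hm : n = 3 * m) (k : Fin m) (j : Fin 3) :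
    (slot hm k j : ℕ) = 3 * (k : ℕ) + (j : ℕ) := rfl

lemma Cnd_iff_slot (h3 : n % 3 = 0) (hm : n = 3 * m) (π : Equiv.Perm (Fin n)) :
    Cnd h3 π ↔ ∀ k, slotm hm π k = 1 := by
  constructor
  · intro hC k
    apply slotm_eq
    intro j hj
    have hjv : (j : ℕ) ≠ 1 := fun hh => hj (Fin.ext hh)
    have hjlt := j.isLt
    have hside : ((slot hm k j : ℕ)) % 3 ≠ 1 := by
      rw [slot_val]
      omega
    have hmid : midv h3 (slot hm k j) = slot hm k 1 := by
      apply Fin.ext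
      rw [midv_val, slot_val, slot_val]
      show 3 * ((3 * (k : ℕ) + (j : ℕ)) / 3) + 1 = 3 * (k : ℕ) + ((1 : Fin 3) : ℕ)
      have : ((1 : Fin 3) : ℕ) = 1 := rfl
      omega
    have := hC (slot hm k j) hside
    rw [hmid] at this
    exact this
  · intro hS v hv
    have hk : (v : ℕ) / 3 < m := by have := v.isLt; omega
    set k : Fin m := ⟨(v : ℕ) / 3, hk⟩ with hkdef
    have hveq : v = slot hm k ⟨(v : ℕ) % 3, by omega⟩ := by
      apply Fin.ext
      rw [slot_val]
      show (v : ℕ) = 3 * ((v : ℕ) / 3) + (v : ℕ) % 3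
      omega
    have hmid : midv h3 v = slot hm k 1 := by
      apply Fin.ext
      rw [midv_val, slot_val]
      show 3 * ((v : ℕ) / 3) + 1 = 3 * ((v : ℕ) / 3) + ((1 : Fin 3) : ℕ)
      rfl
    have hjne : (⟨(v : ℕ) % 3, by omega⟩ : Fin 3) ≠ slotm hm π k := by
      rw [hS k]
      intro hh
      have := congrArg Fin.val hh
      simp only [Fin.val_mk] at this
      have h1v : ((1 : Fin 3) : ℕ) = 1 := rfl
      rw [h1v] at this
      exact hv this
    have := slotm_min hm π k ⟨(v : ℕ) % 3, by omega⟩ hjne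
    rw [hS k] at this
    rw [← hveq] at this
    rw [hmid]
    exact this

end counting2

theorem best_case_count_zero_mod_three (n : ℕ) (hn : 3 ≤ n) (h3 : n % 3 = 0) :
    (B n : ℝ) = (Nat.factorial n : ℝ) / 3 ^ (n / 3) := by
  set m := n / 3 with hmdef
  have hm : n = 3 * m := by omega
  have hmpos : 1 ≤ m := by omega
  have key : B n = Nat.card {σ : Equiv.Perm (Fin n) // ∀ k, slotm hm σ k = 1} := by
    unfold B
    apply Nat.card_congr
    apply Equiv.subtypeEquivRight
    intro π
    have h1 : (n + 2) / 3 = m := by omega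
    rw [h1, gamma_iff_Cnd hm hmpos π, Cnd_iff_slot h3 hm π]
  have hcount := count_slotm hm
  rw [← key] at hcount
  have hcast : (B n : ℝ) * 3 ^ m = (Nat.factorial n : ℝ) := by
    exact_mod_cast congrArg (Nat.cast : ℕ → ℝ) hcount
  rw [eq_div_iff (by positivity)]
  exact hcast
end
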